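/- arXiv:1603.06232 — 11 statements merged into one kernel-verified Lean document; each statement's English description precedes it below -/
import Mathlib

section
/- Let $q$ be a prime power and $X$ a subset of the projective space $\mathbb{P}^m(\mathbb{F}_q)$. Let $a$ be the maximum of $|X \cap \Pi|$ over all hyperplanes $\Pi$ of $\mathbb{P}^m(\mathbb{F}_q)$. Then $|X| \le aq + 1$. -/
open Function

/-- The hyperplane of `ℙ^m(F_q)` determined by a nonzero linear functional `φ`:
the set of projective points whose representing line lies in the kernel of `φ`. -/
def projHyperplane {Fq : Type} [Field Fq] {n : ℕ}
    (φ : (Fin n → Fq) →ₗ[Fq] Fq) : Set (Projectivization Fq (Fin n → Fq)) :=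
  {P | P.submodule ≤ LinearMap.ker φ}

/-- Kernel counting for a surjective linear functional on a finite module. -/
lemma aux_card_ker {K M : Type} [Field K] [Fintype K] [AddCommGroup M] [Module K M] [Finite M]
    (f : M →ₗ[K] K) (hf : Surjective f) :
    Nat.card M = Nat.card (LinearMap.ker f) * Nat.card K := by
  rw [AddSubgroup.card_eq_card_quotient_mul_card_addSubgroup f.toAddMonoidHom.ker]
  have e := QuotientAddGroup.quotientKerEquivOfSurjective f.toAddMonoidHom hf
  rw [mul_comm, Nat.card_congr e.toEquiv]
  congr 1

/-- A nonzero linear map into the base field is surjective. -/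
lemma aux_surj {K M : Type} [Field K] [AddCommGroup M] [Module K M]
    {f : M →ₗ[K] K} (hf : f ≠ 0) : Surjective f := by
  obtain ⟨v, hv⟩ : ∃ v, f v ≠ 0 := by
    by_contra h; push_neg at h; exact hf (LinearMap.ext h)
  intro c
  exact ⟨(c * (f v)⁻¹) • v, by simp [mul_assoc, inv_mul_cancel₀ hv]⟩

lemma aux_card_ne {A : Type} [Finite A] (a : A) :
    Nat.card {x : A // x ≠ a} + 1 = Nat.card A := by
  classical
  simp only [ne_eq]
  rw [← Nat.card_congr (Equiv.sumCompl (· = a)), Nat.card_sum]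
  have h1 : Nat.card {x : A // x = a} = 1 := by
    haveI : Unique {x : A // x = a} := ⟨⟨⟨a, rfl⟩⟩, by rintro ⟨x, rfl⟩; rfl⟩
    exact Nat.card_unique
  omega

/-- The nonzero vectors of a subspace `W` are equinumerous with
(points of `ℙ` inside `W`) × (nonzero scalars). -/
lemma aux_proj_count {K V : Type} [Field K] [AddCommGroup V] [Module K V]
    (W : Submodule K V) :
    Nat.card {P : Projectivization K V // P.submodule ≤ W} * Nat.card Kˣ
      = Nat.card {w : V // w ∈ W ∧ w ≠ 0} := by
  rw [← Nat.card_prod]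
  apply Nat.card_congr
  have hmem : ∀ (P : Projectivization K V), P.submodule ≤ W → P.rep ∈ W := fun P hP =>
    hP (by rw [Projectivization.submodule_eq]; exact Submodule.mem_span_singleton_self _)
  refine Equiv.ofBijective
    (fun pc => ⟨(pc.2 : K) • pc.1.1.rep,
      W.smul_mem _ (hmem _ pc.1.2),
      smul_ne_zero (Units.ne_zero _) pc.1.1.rep_nonzero⟩) ⟨?_, ?_⟩
  · rintro ⟨⟨P, hP⟩, c⟩ ⟨⟨P', hP'⟩, c'⟩ h
    simp only [Subtype.mk_eq_mk] at h
    have h1 : Projectivization.mk K ((c : K) • P.rep)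
        (smul_ne_zero (Units.ne_zero _) P.rep_nonzero) = P := by
      conv_rhs => rw [← P.mk_rep]
      exact (Projectivization.mk_eq_mk_iff K _ _ _ _).2 ⟨c, rfl⟩
    have h2 : Projectivization.mk K ((c' : K) • P'.rep)
        (smul_ne_zero (Units.ne_zero _) P'.rep_nonzero) = P' := by
      conv_rhs => rw [← P'.mk_rep]
      exact (Projectivization.mk_eq_mk_iff K _ _ _ _).2 ⟨c', rfl⟩
    have hPP' : P = P' := by
      rw [← h1, ← h2]
      congr 1
    subst hPP'
    have hc : (c : K) = (c' : K) := smul_left_injective K P.rep_nonzero h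
    simp only [Prod.mk.injEq, Subtype.mk_eq_mk]
    exact ⟨trivial, Units.ext hc⟩
  · rintro ⟨w, hwW, hw⟩
    set P := Projectivization.mk K w hw with hPdef
    have hP : P.submodule ≤ W := by
      rw [hPdef, Projectivization.submodule_mk]
      exact (Submodule.span_singleton_le_iff_mem _ _).2 hwW
    obtain ⟨c, hc⟩ : ∃ c : Kˣ, (c : K) • w = P.rep :=
      (Projectivization.mk_eq_mk_iff K _ _ P.rep_nonzero hw).1 P.mk_rep
    refine ⟨⟨⟨P, hP⟩, c⁻¹⟩, ?_⟩
    apply Subtype.ext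
    show ((c⁻¹ : Kˣ) : K) • P.rep = w
    rw [← hc, smul_smul]
    simp

lemma aux_card_submodule_ne_zero {K V : Type} [Field K] [AddCommGroup V] [Module K V]
    [Finite V] (W : Submodule K V) :
    Nat.card {w : V // w ∈ W ∧ w ≠ 0} + 1 = Nat.card W := by
  have e : {w : V // w ∈ W ∧ w ≠ 0} ≃ {x : W // x ≠ 0} :=
    { toFun := fun w => ⟨⟨w.1, w.2.1⟩, fun h => w.2.2 (congrArg Subtype.val h)⟩
      invFun := fun x => ⟨x.1.1, x.1.2, fun h => x.2 (Subtype.ext h)⟩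
      left_inv := fun w => rfl
      right_inv := fun x => rfl }
  rw [Nat.card_congr e]
  exact aux_card_ne (0 : W)

lemma aux_mem_hyperplane {Fq : Type} [Field Fq] {n : ℕ}
    (φ : (Fin n → Fq) →ₗ[Fq] Fq) (P : Projectivization Fq (Fin n → Fq)) :
    P ∈ projHyperplane φ ↔ φ P.rep = 0 := by
  rw [projHyperplane, Set.mem_setOf_eq, Projectivization.submodule_eq,
    Submodule.span_singleton_le_iff_mem, LinearMap.mem_ker]

/-- If `a` is the maximum of `|X ∩ Π|` over all hyperplanes `Π` of
`ℙ^m(F_q)`, then `|X| ≤ a q + 1`. -/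
theorem statement_0 {Fq : Type} [Field Fq] [Fintype Fq] (q m : ℕ)
    (hq : q = Fintype.card Fq) (hm : 1 ≤ m)
    (X : Set (Projectivization Fq (Fin (m+1) → Fq))) (a : ℕ)
    (ha : IsGreatest {c : ℕ | ∃ φ : (Fin (m+1) → Fq) →ₗ[Fq] Fq, φ ≠ 0 ∧
      c = Nat.card ↥(X ∩ projHyperplane φ)} a) :
    Nat.card X ≤ a * q + 1 := by
  classical
  set V := (Fin (m+1) → Fq) with hV
  set D := (V →ₗ[Fq] Fq) with hD
  haveI : Finite (Projectivization Fq V) := Quotient.finite _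
  haveI : Fintype (Projectivization Fq V) := Fintype.ofFinite _
  haveI : Finite D := Finite.of_injective _ DFunLike.coe_injective
  haveI : Fintype D := Fintype.ofFinite _
  have hq2 : 2 ≤ q := by rw [hq]; exact Fintype.one_lt_card
  have hqnz : Nat.card Fq = q := by rw [Nat.card_eq_fintype_card, hq]
  have hcardV : Nat.card V = q ^ (m+1) := by
    rw [Nat.card_eq_fintype_card]
    simp [hV, hq]
  have hcardD : Nat.card D = q ^ (m+1) := by
    rw [← hcardV]
    exact Nat.card_congr (Pi.basisFun Fq (Fin (m+1))).toDualEquiv.toEquiv.symm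
  -- number of functionals vanishing at a fixed nonzero vector
  have hfib : ∀ v : V, v ≠ 0 → Nat.card {φ : D // φ v = 0} = q ^ m := by
    intro v hv
    have hsurj : Surjective (LinearMap.applyₗ (R := Fq) v : D →ₗ[Fq] Fq) := by
      apply aux_surj
      obtain ⟨i, hi⟩ : ∃ i, v i ≠ 0 := by
        by_contra h; push_neg at h; exact hv (funext h)
      intro h
      apply hi
      have h2 : (LinearMap.applyₗ (R := Fq) v) (LinearMap.proj i) = 0 := by rw [h]; rfl
      exact h2
    have hcard := aux_card_ker _ hsurj
    rw [hcardD, hqnz] at hcard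
    have hcongr : Nat.card {φ : D // φ v = 0}
        = Nat.card (LinearMap.ker (LinearMap.applyₗ (R := Fq) v : D →ₗ[Fq] Fq)) :=
      Nat.card_congr (Equiv.subtypeEquivRight (fun φ => by simp [LinearMap.mem_ker]))
    rw [hcongr]
    have hqpos : 0 < q := by omega
    have hmul : Nat.card (LinearMap.ker (LinearMap.applyₗ (R := Fq) v : D →ₗ[Fq] Fq)) * q
        = q ^ m * q := by rw [← hcard, pow_succ]
    exact Nat.eq_of_mul_eq_mul_right hqpos hmul
  -- Finset setup
  set XF : Finset (Projectivization Fq V) := Finset.univ.filter (· ∈ X) with hXF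
  set Φ : Finset D := Finset.univ.filter (· ≠ 0) with hΦ
  have hcardX : Nat.card X = XF.card := by
    rw [Nat.card_coe_set_eq, Set.ncard_eq_toFinset_card']
    congr 1
    ext P
    simp [hXF]
  have hΦcard : Φ.card + 1 = q ^ (m+1) := by
    rw [← hcardD, ← aux_card_ne (0 : D)]
    congr 1
    rw [Nat.card_eq_fintype_card, Fintype.card_subtype]
  -- intersection cardinalities as Finset cards
  have hS : ∀ φ : D, Nat.card ↥(X ∩ projHyperplane φ)
      = (XF.filter (· ∈ projHyperplane φ)).card := by
    intro φ
    rw [Nat.card_coe_set_eq, Set.ncard_eq_toFinset_card']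
    congr 1
    ext P
    simp [hXF, Finset.filter_filter]
  -- per-point count of hyperplanes through a point
  have hk : ∀ P : Projectivization Fq V,
      (Φ.filter (fun φ => P ∈ projHyperplane φ)).card + 1 = q ^ m := by
    intro P
    have h0 : Finset.univ.filter (fun φ : D => φ P.rep = 0)
        = insert 0 (Φ.filter (fun φ => P ∈ projHyperplane φ)) := by
      ext φ
      simp only [Finset.mem_filter, Finset.mem_univ, true_and, Finset.mem_insert, hΦ,
        aux_mem_hyperplane]
      by_cases hφ : φ = 0
      · simp only [hφ, ne_eq, not_true_eq_false, false_and, or_false, true_or, iff_true]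
        exact LinearMap.zero_apply _
      · simp only [hφ, ne_eq, not_false_eq_true, true_and, or_iff_right_iff_imp]
        rw [aux_mem_hyperplane]
        tauto
    have h1 : (0 : D) ∉ Φ.filter (fun φ : D => P ∈ projHyperplane φ) := by
      simp [hΦ]
    have h2 : (Finset.univ.filter (fun φ : D => φ P.rep = 0)).card
        = (Φ.filter (fun φ => P ∈ projHyperplane φ)).card + 1 := by
      rw [h0]; exact Finset.card_insert_of_notMem h1
    have h3 : Nat.card {φ : D // φ P.rep = 0}
        = (Finset.univ.filter (fun φ : D => φ P.rep = 0)).card := by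
      rw [Nat.card_eq_fintype_card, Fintype.card_subtype]
    have h4 := hfib P.rep P.rep_nonzero
    omega
  -- double counting
  have key : ∑ φ ∈ Φ, (XF.filter (· ∈ projHyperplane φ)).card
      = ∑ P ∈ XF, (Φ.filter (fun φ => P ∈ projHyperplane φ)).card := by
    simp_rw [Finset.card_filter]
    exact Finset.sum_comm
  set k := q ^ m - 1 with hkdef
  have hq1m : q ≤ q ^ m := Nat.le_self_pow (by omega) q
  have hkk : k + 1 = q ^ m := by omega
  have hsum2 : ∑ P ∈ XF, (Φ.filter (fun φ => P ∈ projHyperplane φ)).card = XF.card * k := by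
    rw [Finset.sum_congr rfl (fun P _ => (by have := hk P; omega :
      (Φ.filter (fun φ => P ∈ projHyperplane φ)).card = k)), Finset.sum_const, smul_eq_mul]
  have hsum1 : ∑ φ ∈ Φ, (XF.filter (· ∈ projHyperplane φ)).card ≤ Φ.card * a :=
    calc ∑ φ ∈ Φ, (XF.filter (· ∈ projHyperplane φ)).card
        ≤ ∑ _φ ∈ Φ, a := Finset.sum_le_sum (fun φ hφ => by
          rw [← hS φ]
          exact ha.2 ⟨φ, (Finset.mem_filter.1 hφ).2, rfl⟩)
      _ = Φ.card * a := by rw [Finset.sum_const, smul_eq_mul]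
  -- the bound a * (q-1) ≤ k
  obtain ⟨φ₀, hφ₀ne, hφ₀⟩ := ha.1
  have hkerφ₀ : Nat.card (LinearMap.ker φ₀) = q ^ m := by
    have hcard := aux_card_ker φ₀ (aux_surj hφ₀ne)
    rw [hcardV, hqnz] at hcard
    have h2 : Nat.card (LinearMap.ker φ₀) * q = q ^ m * q := by
      rw [← pow_succ]; exact hcard.symm
    exact Nat.eq_of_mul_eq_mul_right (show 0 < q by omega) h2
  have hneker := aux_card_submodule_ne_zero (LinearMap.ker φ₀)
  rw [hkerφ₀] at hneker
  set u := q - 1 with hudef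
  have hu : Nat.card Fqˣ = u := by
    rw [Nat.card_units, hqnz]
  have hproj : Nat.card {P : Projectivization Fq V // P.submodule ≤ LinearMap.ker φ₀} * u
      = k := by
    rw [← hu]
    rw [aux_proj_count (LinearMap.ker φ₀)]
    omega
  have haH : a ≤ Nat.card {P : Projectivization Fq V // P.submodule ≤ LinearMap.ker φ₀} := by
    rw [hφ₀]
    apply Nat.card_le_card_of_injective
      (fun x => (⟨x.1, x.2.2⟩ : {P : Projectivization Fq V // P.submodule ≤ LinearMap.ker φ₀}))
    intro x y h
    apply Subtype.ext
    exact congrArg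
      (fun z : {P : Projectivization Fq V // P.submodule ≤ LinearMap.ker φ₀} => z.val) h
  have hau : a * u ≤ k := by
    calc a * u ≤ Nat.card {P : Projectivization Fq V // P.submodule ≤ LinearMap.ker φ₀} * u :=
      Nat.mul_le_mul_right _ haH
    _ = k := hproj
  -- final arithmetic
  have hx : XF.card * k ≤ Φ.card * a := by
    rw [← hsum2, ← key]; exact hsum1
  have hΦ2 : Φ.card = k * q + u := by
    have hd : (k+1) * q = k * q + q := by ring
    have hp : q ^ (m+1) = (k+1) * q := by rw [pow_succ, hkk]
    omega
  have hfin : XF.card * k ≤ (a * q + 1) * k := by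
    calc XF.card * k ≤ Φ.card * a := hx
      _ = (k * q + u) * a := by rw [hΦ2]
      _ = k * q * a + u * a := by ring
      _ ≤ k * q * a + k := by
          have : u * a ≤ k := by rw [mul_comm]; exact hau
          omega
      _ = (a * q + 1) * k := by ring
  have hkpos : 0 < k := by omega
  rw [hcardX]
  exact Nat.le_of_mul_le_mul_right hfin hkpos
end

section
/- Let $q$ be a prime power, $m \ge 1$, $1 \le d \le q$, and let $f \in \mathbb{F}_q[x_1, \ldots, x_m]$ be a nonzero polynomial of degree $d$. Then the number of zeros of $f$ in $\mathbb{F}_q^m$ is at most $dq^{m-1}$. -/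
open MvPolynomial Polynomial Finset

lemma uni_count' {Fq : Type} [Field Fq] [Fintype Fq] [DecidableEq Fq]
    (p : Fq[X]) (hp : p ≠ 0) :
    (univ.filter fun t : Fq => p.eval t = 0).card ≤ p.natDegree := by
  calc (univ.filter fun t : Fq => p.eval t = 0).card
      ≤ p.roots.toFinset.card := by
        apply Finset.card_le_card
        intro t ht
        simp only [mem_filter] at ht
        simp [Multiset.mem_toFinset, Polynomial.mem_roots hp, IsRoot, ht.2]
    _ ≤ Multiset.card p.roots := p.roots.toFinset_card_le
    _ ≤ p.natDegree := p.card_roots'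

lemma eval_cons' {Fq : Type} [Field Fq] {m : ℕ} (g : MvPolynomial (Fin (m+1)) Fq)
    (t : Fq) (y : Fin m → Fq) :
    eval (Fin.cons t y) g = ((finSuccEquiv Fq m g).map (MvPolynomial.eval y)).eval t := by
  have h1 := MvPolynomial.eval_polynomial_eval_finSuccEquiv (x := y) g (MvPolynomial.C t)
  simp only [MvPolynomial.eval_C] at h1
  have h2 : (MvPolynomial.eval y) (Polynomial.eval (MvPolynomial.C t) (finSuccEquiv Fq m g))
      = Polynomial.eval₂ (MvPolynomial.eval y) t (finSuccEquiv Fq m g) := by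
    rw [Polynomial.eval, Polynomial.hom_eval₂]
    simp
  rw [Polynomial.eval_map, ← h2, h1]
  rfl

lemma sz_key {Fq : Type} [Field Fq] [Fintype Fq] [DecidableEq Fq] :
    ∀ (m : ℕ) (e : ℕ), ∀ g : MvPolynomial (Fin m) Fq, g ≠ 0 → g.totalDegree ≤ e →
    (univ.filter fun x : Fin m → Fq => eval x g = 0).card * Fintype.card Fq
      ≤ e * (Fintype.card Fq) ^ m := by
  intro m
  induction m with
  | zero =>
    intro e g hg _
    have h0 : ∀ x ∈ (univ : Finset (Fin 0 → Fq)), ¬ (eval x g = 0) := by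
      intro x _
      rw [MvPolynomial.eq_C_of_isEmpty g, MvPolynomial.eval_C]
      intro h
      exact hg (by rw [MvPolynomial.eq_C_of_isEmpty g, h, map_zero])
    rw [Finset.filter_false_of_mem h0]
    simp
  | succ m ih =>
    intro e g hg hdeg
    set q := Fintype.card Fq with hq
    set P := finSuccEquiv Fq m g with hP
    have hPne : P ≠ 0 := by
      simp [hP, EmbeddingLike.map_eq_zero_iff, hg]
    set k := P.natDegree with hk
    set c := P.coeff k with hc
    have hcne : c ≠ 0 := by
      simpa [hc, hk] using Polynomial.leadingCoeff_ne_zero.mpr hPne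
    have hck : c.totalDegree + k ≤ e :=
      le_trans (MvPolynomial.totalDegree_coeff_finSuccEquiv_add_le g k hcne) hdeg
    have hke : k ≤ e := le_trans (Nat.le_add_left _ _) hck
    -- fiberwise count
    have hfib : (univ.filter fun x : Fin (m+1) → Fq => eval x g = 0).card
        = ∑ y : Fin m → Fq,
          ((univ.filter fun x : Fin (m+1) → Fq => eval x g = 0).filter
            fun x => Fin.tail x = y).card := by
      exact Finset.card_eq_sum_card_fiberwise (fun x _ => mem_univ _)
    -- per fiber bound
    have hfib2 : ∀ y : Fin m → Fq,
        ((univ.filter fun x : Fin (m+1) → Fq => eval x g = 0).filter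
            fun x => Fin.tail x = y).card
        ≤ (univ.filter fun t : Fq => eval (Fin.cons t y) g = 0).card := by
      intro y
      apply Finset.card_le_card_of_injOn (fun x => x 0)
      · intro x hx
        simp only [Finset.mem_coe, mem_filter, mem_univ, true_and] at hx ⊢
        have : Fin.cons (x 0) y = x := by
          rw [← hx.2]; exact Fin.cons_self_tail x
        rw [this]; exact hx.1
      · intro a ha b hb hab
        simp only [coe_filter, Set.mem_setOf_eq] at ha hb
        have h00 : a 0 = b 0 := hab
        have : Fin.cons (a 0) (Fin.tail a) = Fin.cons (b 0) (Fin.tail b) := by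
          rw [h00, ha.2, hb.2]
        rw [← Fin.cons_self_tail a, ← Fin.cons_self_tail b, this]
    -- bound per y
    have hNy : ∀ y : Fin m → Fq,
        (univ.filter fun t : Fq => eval (Fin.cons t y) g = 0).card
        ≤ if MvPolynomial.eval y c = 0 then q else k := by
      intro y
      split_ifs with hyc
      · exact le_trans (Finset.card_filter_le _ _) (by simp [hq])
      · set py := P.map (MvPolynomial.eval y) with hpy
        have hpyne : py ≠ 0 := fun h => hyc (by
          have := congrArg (fun r => Polynomial.coeff r k) h
          simpa [hpy, Polynomial.coeff_map] using this)
        have hdegy : py.natDegree ≤ k := Polynomial.natDegree_map_le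
        calc (univ.filter fun t : Fq => eval (Fin.cons t y) g = 0).card
            = (univ.filter fun t : Fq => py.eval t = 0).card := by
              congr 1; ext t; simp [eval_cons' g t y, hpy, hP]
          _ ≤ py.natDegree := uni_count' py hpyne
          _ ≤ k := hdegy
    set B := (univ.filter fun y : Fin m → Fq => MvPolynomial.eval y c = 0).card with hB
    have hsum : (univ.filter fun x : Fin (m+1) → Fq => eval x g = 0).card
        ≤ B * q + k * q ^ m := by
      rw [hfib]
      calc ∑ y : Fin m → Fq, ((univ.filter fun x : Fin (m+1) → Fq => eval x g = 0).filter
              fun x => Fin.tail x = y).card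
          ≤ ∑ y : Fin m → Fq, (if MvPolynomial.eval y c = 0 then q else k) :=
            Finset.sum_le_sum fun y _ => le_trans (hfib2 y) (hNy y)
        _ ≤ ∑ y : Fin m → Fq, ((if MvPolynomial.eval y c = 0 then q else 0) + k) := by
            apply Finset.sum_le_sum; intro y _; split_ifs <;> simp
        _ = B * q + k * q ^ m := by
            rw [Finset.sum_add_distrib, ← Finset.sum_filter, Finset.sum_const, Finset.sum_const]
            simp [hB, hq, mul_comm, Finset.card_univ]
    -- IH on c with e - k
    have hBq : B * q ≤ (e - k) * q ^ m :=
      ih (e - k) c hcne (Nat.le_sub_of_add_le hck)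
    calc (univ.filter fun x : Fin (m+1) → Fq => eval x g = 0).card * q
        ≤ (B * q + k * q ^ m) * q := Nat.mul_le_mul_right _ hsum
      _ = B * q * q + k * q ^ m * q := by ring
      _ ≤ (e - k) * q ^ m * q + k * q ^ m * q := by
          exact Nat.add_le_add_right (Nat.mul_le_mul_right _ hBq) _
      _ = ((e - k) + k) * q ^ (m + 1) := by ring
      _ = e * q ^ (m + 1) := by rw [Nat.sub_add_cancel hke]

/-- Ore's inequality: a nonzero polynomial `f ∈ F_q[x₁,…,x_m]` of degree
`d` with `1 ≤ d ≤ q` has at most `d·q^(m-1)` zeros in `F_q^m`. -/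
theorem statement_4 {Fq : Type} [Field Fq] [Fintype Fq] (q m d : ℕ)
    (hq : q = Fintype.card Fq) (hm : 1 ≤ m) (hd1 : 1 ≤ d) (hdq : d ≤ q)
    (f : MvPolynomial (Fin m) Fq) (hf : f ≠ 0) (hdeg : f.totalDegree = d) :
    Nat.card {x : Fin m → Fq | MvPolynomial.eval x f = 0} ≤ d * q ^ (m - 1) := by
  classical
  have hkey := sz_key m d f hf (le_of_eq hdeg)
  have hcard : Nat.card {x : Fin m → Fq | MvPolynomial.eval x f = 0}
      = (univ.filter fun x : Fin m → Fq => MvPolynomial.eval x f = 0).card := by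
    rw [Nat.card_eq_fintype_card]
    simp [Fintype.card_subtype]
  rw [hcard, hq]
  have hqpos : 0 < Fintype.card Fq := Fintype.card_pos
  apply Nat.le_of_mul_le_mul_right _ hqpos
  calc (univ.filter fun x : Fin m → Fq => MvPolynomial.eval x f = 0).card * Fintype.card Fq
      ≤ d * Fintype.card Fq ^ m := hkey
    _ = d * Fintype.card Fq ^ (m - 1) * Fintype.card Fq := by
        rw [mul_assoc, ← pow_succ, Nat.sub_add_cancel hm]
end

section
/- Suppose $G_1, G_2, G_3$ are coprime homogeneous polynomials in $\mathbb{F}_q[x_0, \ldots, x_m]$, all of the same degree $k \ge 2$, such that for each pair $i < j$ the degree of $\gcd(G_i, G_j)$ is $k - 1$. Then $k = 2$, and there exist homogeneous linear polynomials $H_1, H_2, H_3$, no two of which differ by a constant multiple, such that $G_1 = H_1H_2$, $G_2 = H_2H_3$, and $G_3 = H_3H_1$ (up to nonzero scalar multiples). -/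
/-- `D` is a gcd of `A` and `B`: a common divisor divisible by every common divisor. -/
def IsGcdOf {Fq : Type} [Field Fq] {n : ℕ} (D A B : MvPolynomial (Fin n) Fq) : Prop :=
  D ∣ A ∧ D ∣ B ∧ ∀ E : MvPolynomial (Fin n) Fq, E ∣ A → E ∣ B → E ∣ D

open MvPolynomial

noncomputable def phimap (σ R : Type*) [CommSemiring R] :
    MvPolynomial σ R →ₐ[R] Polynomial (MvPolynomial σ R) :=
  MvPolynomial.aeval (fun i => Polynomial.C (MvPolynomial.X i) * Polynomial.X)

lemma phimap_monomial {σ R : Type*} [CommSemiring R] (u : σ →₀ ℕ) (a : R) :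
    phimap σ R (monomial u a) =
      Polynomial.C (monomial u a) * Polynomial.X ^ (u.degree) := by
  have key : (u.prod fun i e => (Polynomial.C (X i : MvPolynomial σ R) * Polynomial.X) ^ e) =
      Polynomial.C (u.prod fun i e => (X i : MvPolynomial σ R) ^ e) *
        Polynomial.X ^ (u.degree) := by
    rw [Finsupp.prod, Finsupp.prod, Finsupp.degree]
    simp only [mul_pow]
    rw [Finset.prod_mul_distrib, Finset.prod_pow_eq_pow_sum]
    congr 1
    rw [map_prod]
    simp [Polynomial.C_pow]
  rw [monomial_eq]
  simp only [phimap, map_mul, aeval_C, map_finsuppProd, map_pow, aeval_X]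
  rw [Polynomial.algebraMap_apply, MvPolynomial.algebraMap_eq]
  simp only [Finsupp.prod, ← Polynomial.C_pow, ← map_prod]
  simp only [Finsupp.prod] at key
  rw [key]
  ring

lemma phimap_coeff_coeff {σ R : Type*} [CommSemiring R] (P : MvPolynomial σ R)
    (n : ℕ) (u : σ →₀ ℕ) :
    MvPolynomial.coeff u ((phimap σ R P).coeff n) =
      if u.degree = n then MvPolynomial.coeff u P else 0 := by
  classical
  induction P using MvPolynomial.induction_on' with
  | monomial v a =>
    rw [phimap_monomial, Polynomial.coeff_C_mul, Polynomial.coeff_X_pow]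
    simp only [mul_ite, mul_one, mul_zero]
    by_cases hv : v = u
    · subst hv
      by_cases h : n = v.degree
      · rw [if_pos h, if_pos h.symm]
      · rw [if_neg h, if_neg (fun hh => h hh.symm), coeff_zero]
    · have hcv : coeff u (monomial v a) = (0 : R) := by rw [coeff_monomial, if_neg hv]
      rw [hcv, ite_self]
      split
      · exact hcv
      · exact coeff_zero u
  | add p q hp hq =>
    simp only [map_add, Polynomial.coeff_add, coeff_add, hp, hq]
    split <;> simp

lemma phimap_ne_zero {σ R : Type*} [CommSemiring R] {P : MvPolynomial σ R} (hP : P ≠ 0) :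
    phimap σ R P ≠ 0 := by
  obtain ⟨u, hu⟩ := MvPolynomial.exists_coeff_ne_zero hP
  intro h
  have := phimap_coeff_coeff P u.degree u
  rw [h] at this
  simp only [Polynomial.coeff_zero, coeff_zero, if_pos rfl] at this
  exact hu this.symm

lemma coeff_phimap_eq_zero {σ R : Type*} [CommSemiring R] {P : MvPolynomial σ R} {n : ℕ}
    (h : P.IsHomogeneous n) {d : ℕ} (hd : d ≠ n) : (phimap σ R P).coeff d = 0 := by
  ext u
  rw [phimap_coeff_coeff, coeff_zero]
  split
  · next hu => exact h.coeff_eq_zero (by rw [hu]; exact hd)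
  · rfl

lemma isHomogeneous_of_phimap {σ R : Type*} [CommSemiring R] {P : MvPolynomial σ R} {a : ℕ}
    (h : ∀ d ≠ a, (phimap σ R P).coeff d = 0) : P.IsHomogeneous a := by
  intro u hu
  change Finsupp.weight (fun _ => 1) u = a
  rw [← Finsupp.degree_eq_weight_one]
  by_contra hne
  have := phimap_coeff_coeff P u.degree u
  rw [h u.degree hne, if_pos rfl, coeff_zero] at this
  exact hu this.symm

lemma isHomogeneous_of_mul {σ R : Type*} [CommRing R] [IsDomain R]
    {A B : MvPolynomial σ R} {n : ℕ}
    (h : (A * B).IsHomogeneous n) (hA : A ≠ 0) (hB : B ≠ 0) :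
    ∃ a b : ℕ, a + b = n ∧ A.IsHomogeneous a ∧ B.IsHomogeneous b := by
  have hAB : A * B ≠ 0 := mul_ne_zero hA hB
  have hpA : phimap σ R A ≠ 0 := phimap_ne_zero hA
  have hpB : phimap σ R B ≠ 0 := phimap_ne_zero hB
  have hmul : phimap σ R (A * B) = phimap σ R A * phimap σ R B := map_mul _ _ _
  have hdeg_le : (phimap σ R (A * B)).natDegree ≤ n := by
    rw [Polynomial.natDegree_le_iff_coeff_eq_zero]
    exact fun N hN => coeff_phimap_eq_zero h (Nat.ne_of_gt hN)
  have htr_ge : n ≤ (phimap σ R (A * B)).natTrailingDegree := by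
    apply Polynomial.le_natTrailingDegree (phimap_ne_zero hAB)
    exact fun m hm => coeff_phimap_eq_zero h (Nat.ne_of_lt hm)
  rw [hmul] at hdeg_le htr_ge
  rw [Polynomial.natDegree_mul hpA hpB] at hdeg_le
  rw [Polynomial.natTrailingDegree_mul hpA hpB] at htr_ge
  have h1 := Polynomial.natTrailingDegree_le_natDegree (phimap σ R A)
  have h2 := Polynomial.natTrailingDegree_le_natDegree (phimap σ R B)
  have heqA : (phimap σ R A).natTrailingDegree = (phimap σ R A).natDegree := by omega
  have heqB : (phimap σ R B).natTrailingDegree = (phimap σ R B).natDegree := by omega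
  refine ⟨(phimap σ R A).natDegree, (phimap σ R B).natDegree, by omega, ?_, ?_⟩
  · apply isHomogeneous_of_phimap
    intro d hd
    rcases lt_or_gt_of_ne hd with hlt | hgt
    · exact Polynomial.coeff_eq_zero_of_lt_natTrailingDegree (by omega)
    · exact Polynomial.coeff_eq_zero_of_natDegree_lt hgt
  · apply isHomogeneous_of_phimap
    intro d hd
    rcases lt_or_gt_of_ne hd with hlt | hgt
    · exact Polynomial.coeff_eq_zero_of_lt_natTrailingDegree (by omega)
    · exact Polynomial.coeff_eq_zero_of_natDegree_lt hgt

lemma not_isUnit_of_isHomogeneous {σ R : Type*} [CommRing R] [IsDomain R]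
    {P : MvPolynomial σ R} {n : ℕ} (hP : P.IsHomogeneous n) (hn : n ≠ 0) (h0 : P ≠ 0) :
    ¬ IsUnit P := by
  intro h
  obtain ⟨Q, hQ⟩ := h.exists_right_inv
  have hQ0 : Q ≠ 0 := by rintro rfl; rw [mul_zero] at hQ; exact zero_ne_one hQ
  have h1 : (P * Q).IsHomogeneous 0 := by rw [hQ]; exact MvPolynomial.isHomogeneous_one σ R
  obtain ⟨a, b, hab, hPa, -⟩ := isHomogeneous_of_mul h1 h0 hQ0
  have := hP.inj_right hPa h0
  omega

lemma eq_C_of_isHomogeneous_zero {σ R : Type*} [CommSemiring R] {P : MvPolynomial σ R}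
    (hP : P.IsHomogeneous 0) : P = MvPolynomial.C (MvPolynomial.coeff 0 P) := by
  classical
  ext d
  rw [MvPolynomial.coeff_C]
  split
  · next h => rw [← h]
  · next h =>
    apply hP.coeff_eq_zero
    intro hdeg
    exact h ((Finsupp.degree_eq_zero_iff d).mp hdeg).symm

/-- Lemma 3.3: if `G₁, G₂, G₃` are coprime homogeneous polynomials of the
same degree `k ≥ 2` such that each pairwise gcd has degree `k - 1`, then `k = 2` and
`G₁ = H₁H₂`, `G₂ = H₂H₃`, `G₃ = H₃H₁` up to nonzero scalars, for linear forms
`H₁, H₂, H₃` no two of which differ by a constant multiple. -/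
theorem statement_6 {Fq : Type} [Field Fq] [Fintype Fq] (m k : ℕ) (hk : 2 ≤ k)
    (G₁ G₂ G₃ : MvPolynomial (Fin (m+1)) Fq)
    (hg1 : G₁.IsHomogeneous k) (hg2 : G₂.IsHomogeneous k) (hg3 : G₃.IsHomogeneous k)
    (hG1 : G₁ ≠ 0) (hG2 : G₂ ≠ 0) (hG3 : G₃ ≠ 0)
    (hcop : ∀ E : MvPolynomial (Fin (m+1)) Fq, E ∣ G₁ → E ∣ G₂ → E ∣ G₃ → IsUnit E)
    (h12 : ∃ D : MvPolynomial (Fin (m+1)) Fq, IsGcdOf D G₁ G₂ ∧ D.totalDegree = k - 1)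
    (h13 : ∃ D : MvPolynomial (Fin (m+1)) Fq, IsGcdOf D G₁ G₃ ∧ D.totalDegree = k - 1)
    (h23 : ∃ D : MvPolynomial (Fin (m+1)) Fq, IsGcdOf D G₂ G₃ ∧ D.totalDegree = k - 1) :
    k = 2 ∧ ∃ H₁ H₂ H₃ : MvPolynomial (Fin (m+1)) Fq,
      H₁.IsHomogeneous 1 ∧ H₂.IsHomogeneous 1 ∧ H₃.IsHomogeneous 1 ∧
      (∀ c : Fq, H₂ ≠ c • H₁) ∧ (∀ c : Fq, H₃ ≠ c • H₁) ∧ (∀ c : Fq, H₃ ≠ c • H₂) ∧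
      ∃ c₁ c₂ c₃ : Fq, c₁ ≠ 0 ∧ c₂ ≠ 0 ∧ c₃ ≠ 0 ∧
        G₁ = c₁ • (H₁ * H₂) ∧ G₂ = c₂ • (H₂ * H₃) ∧ G₃ = c₃ • (H₃ * H₁) := by
  obtain ⟨D12, ⟨hD12g1, hD12g2, -⟩, hD12deg⟩ := h12
  obtain ⟨D13, ⟨hD13g1, hD13g3, -⟩, hD13deg⟩ := h13
  obtain ⟨D23, ⟨hD23g2, hD23g3, -⟩, hD23deg⟩ := h23
  have hD12ne : D12 ≠ 0 := by rintro rfl; exact hG1 (zero_dvd_iff.mp hD12g1)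
  have hD13ne : D13 ≠ 0 := by rintro rfl; exact hG1 (zero_dvd_iff.mp hD13g1)
  have hD23ne : D23 ≠ 0 := by rintro rfl; exact hG2 (zero_dvd_iff.mp hD23g2)
  -- relative primality
  have hrp1 : IsRelPrime D12 D13 := fun E h1 h2 =>
    hcop E (h1.trans hD12g1) (h1.trans hD12g2) (h2.trans hD13g3)
  have hrp2 : IsRelPrime D12 D23 := fun E h1 h2 =>
    hcop E (h1.trans hD12g1) (h1.trans hD12g2) (h2.trans hD23g3)
  have hrp3 : IsRelPrime D13 D23 := fun E h1 h2 =>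
    hcop E (h1.trans hD13g1) (h2.trans hD23g2) (h1.trans hD13g3)
  obtain ⟨R1, hR1⟩ : D12 * D13 ∣ G₁ := hrp1.mul_dvd hD12g1 hD13g1
  obtain ⟨R2, hR2⟩ : D12 * D23 ∣ G₂ := hrp2.mul_dvd hD12g2 hD23g2
  obtain ⟨R3, hR3⟩ : D13 * D23 ∣ G₃ := hrp3.mul_dvd hD13g3 hD23g3
  have hR1ne : R1 ≠ 0 := by rintro rfl; rw [mul_zero] at hR1; exact hG1 hR1
  have hR2ne : R2 ≠ 0 := by rintro rfl; rw [mul_zero] at hR2; exact hG2 hR2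
  have hR3ne : R3 ≠ 0 := by rintro rfl; rw [mul_zero] at hR3; exact hG3 hR3
  -- decomposition of G₁
  have decomp : ∀ (G DA DB RR : MvPolynomial (Fin (m+1)) Fq), G.IsHomogeneous k →
      G = DA * DB * RR → DA ≠ 0 → DB ≠ 0 → RR ≠ 0 →
      DA.totalDegree = k - 1 → DB.totalDegree = k - 1 →
      ∃ r : ℕ, (k - 1) + (k - 1) + r = k ∧ DA.IsHomogeneous (k-1) ∧ DB.IsHomogeneous (k-1) ∧
        RR.IsHomogeneous r := by
    intro G DA DB RR hG hGeq hDA hDB hRR hdA hdB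
    rw [hGeq] at hG
    obtain ⟨a, r, har, hab, hr⟩ := isHomogeneous_of_mul hG (mul_ne_zero hDA hDB) hRR
    obtain ⟨a1, a2, ha12, hA, hB⟩ := isHomogeneous_of_mul hab hDA hDB
    have e1 : a1 = k - 1 := by rw [← hdA]; exact (hA.totalDegree hDA).symm
    have e2 : a2 = k - 1 := by rw [← hdB]; exact (hB.totalDegree hDB).symm
    exact ⟨r, by omega, e1 ▸ hA, e2 ▸ hB, hr⟩
  obtain ⟨r1, hsum1, hA12, hA13, hr1⟩ :=
    decomp G₁ D12 D13 R1 hg1 hR1 hD12ne hD13ne hR1ne hD12deg hD13deg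
  obtain ⟨r2, hsum2, -, hA23, hr2⟩ :=
    decomp G₂ D12 D23 R2 hg2 hR2 hD12ne hD23ne hR2ne hD12deg hD23deg
  obtain ⟨r3, hsum3, -, -, hr3⟩ :=
    decomp G₃ D13 D23 R3 hg3 hR3 hD13ne hD23ne hR3ne hD13deg hD23deg
  have hk2 : k = 2 := by omega
  subst hk2
  have hr10 : r1 = 0 := by omega
  have hr20 : r2 = 0 := by omega
  have hr30 : r3 = 0 := by omega
  subst hr10; subst hr20; subst hr30
  have hc1 := eq_C_of_isHomogeneous_zero hr1
  have hc2 := eq_C_of_isHomogeneous_zero hr2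
  have hc3 := eq_C_of_isHomogeneous_zero hr3
  have hone : (2 : ℕ) - 1 = 1 := rfl
  rw [hone] at hA12 hA13 hA23
  -- non-units
  have hnu12 : ¬ IsUnit D12 := not_isUnit_of_isHomogeneous hA12 one_ne_zero hD12ne
  have hnu13 : ¬ IsUnit D13 := not_isUnit_of_isHomogeneous hA13 one_ne_zero hD13ne
  have hnu23 : ¬ IsUnit D23 := not_isUnit_of_isHomogeneous hA23 one_ne_zero hD23ne
  refine ⟨rfl, D13, D12, D23, hA13, hA12, hA23, ?_, ?_, ?_,
    MvPolynomial.coeff 0 R1, MvPolynomial.coeff 0 R2, MvPolynomial.coeff 0 R3,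
    ?_, ?_, ?_, ?_, ?_, ?_⟩
  · -- D12 ≠ c • D13
    intro c hc
    have hcne : c ≠ 0 := by rintro rfl; rw [zero_smul] at hc; exact hD12ne hc
    have : D13 ∣ G₂ := by
      refine Dvd.dvd.trans ⟨MvPolynomial.C c, ?_⟩ hD12g2
      rw [hc, MvPolynomial.smul_eq_C_mul, mul_comm]
    exact hnu13 (hcop D13 hD13g1 this hD13g3)
  · -- D23 ≠ c • D13
    intro c hc
    have hcne : c ≠ 0 := by rintro rfl; rw [zero_smul] at hc; exact hD23ne hc
    have : D13 ∣ G₂ := by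
      refine Dvd.dvd.trans ⟨MvPolynomial.C c, ?_⟩ hD23g2
      rw [hc, MvPolynomial.smul_eq_C_mul, mul_comm]
    exact hnu13 (hcop D13 hD13g1 this hD13g3)
  · -- D23 ≠ c • D12
    intro c hc
    have hcne : c ≠ 0 := by rintro rfl; rw [zero_smul] at hc; exact hD23ne hc
    have : D12 ∣ G₃ := by
      refine Dvd.dvd.trans ⟨MvPolynomial.C c, ?_⟩ hD23g3
      rw [hc, MvPolynomial.smul_eq_C_mul, mul_comm]
    exact hnu12 (hcop D12 hD12g1 hD12g2 this)
  · intro h; rw [h, map_zero] at hc1; exact hR1ne hc1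
  · intro h; rw [h, map_zero] at hc2; exact hR2ne hc2
  · intro h; rw [h, map_zero] at hc3; exact hR3ne hc3
  · rw [hR1, MvPolynomial.smul_eq_C_mul, ← hc1]; ring
  · rw [hR2, MvPolynomial.smul_eq_C_mul, ← hc2]; ring
  · rw [hR3, MvPolynomial.smul_eq_C_mul, ← hc3]; ring
end

section
/- Let $q$ be a prime power with $q \ge 4$, $m \ge 2$, and $1 < d < q - 1$. There exist three linearly independent homogeneous polynomials of degree $d$ in $\mathbb{F}_q[x_0, \ldots, x_m]$ whose number of common zeros in $\mathbb{P}^m(\mathbb{F}_q)$ is exactly $(d-1)q^{m-1} + p_{m-2} + \lfloor q^{m-3} \rfloor$, where $p_{m-2} = q^{m-2} + \cdots + q + 1$ and $\lfloor q^{m-3}\rfloor = 0$ if $m = 2$. -/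
open Projectivization MvPolynomial


/-- A homogeneous polynomial `F` vanishes at a projective point `P` if it vanishes
at every representative of `P`. -/
def vanishesAt {Fq : Type} [Field Fq] {n : ℕ} (F : MvPolynomial (Fin n) Fq)
    (P : Projectivization Fq (Fin n → Fq)) : Prop :=
  ∀ v : {w : Fin n → Fq // w ≠ 0}, Projectivization.mk' Fq v = P →
    MvPolynomial.eval (v : Fin n → Fq) F = 0

noncomputable def projEquiv {K V : Type*} [Field K] [AddCommGroup V] [Module K V]
    (cond : V → Prop) (hc : ∀ (a : Kˣ) (v : V), cond v → cond (a • v)) :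
    ({P : Projectivization K V // cond P.rep} × Kˣ) ≃ {v : V // v ≠ 0 ∧ cond v} :=
  Equiv.ofBijective
    (fun x => ⟨(x.2 : K) • x.1.1.rep,
      ⟨smul_ne_zero x.2.ne_zero x.1.1.rep_nonzero, by
        have := hc x.2 _ x.1.2
        rwa [Units.smul_def] at this⟩⟩)
    (by
      constructor
      · rintro ⟨⟨P, hP⟩, u⟩ ⟨⟨Q, hQ⟩, u'⟩ h
        simp only [Subtype.mk.injEq] at h
        have hPQ : P = Q := by
          conv_lhs => rw [← P.mk_rep]
          conv_rhs => rw [← Q.mk_rep]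
          rw [mk_eq_mk_iff]
          exact ⟨u⁻¹ * u', by
            rw [Units.smul_def, Units.val_mul, mul_smul, ← h, Units.val_inv_eq_inv_val,
              inv_smul_smul₀ u.ne_zero]⟩
        subst hPQ
        have : u = u' := Units.ext (smul_left_injective K P.rep_nonzero h)
        simp [this]
      · rintro ⟨v, hv, hcond⟩
        obtain ⟨a, ha⟩ := exists_smul_eq_mk_rep K v hv
        refine ⟨⟨⟨mk K v hv, ?_⟩, a⁻¹⟩, Subtype.ext ?_⟩
        · rw [← ha]; exact hc a v hcond
        · show (↑a⁻¹ : K) • (mk K v hv).rep = v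
          rw [Units.smul_def] at ha
          rw [← ha, Units.val_inv_eq_inv_val, inv_smul_smul₀ a.ne_zero])

lemma card_cond_mul {K V : Type*} [Field K] [Fintype K] [AddCommGroup V] [Module K V]
    (cond : V → Prop) (hc : ∀ (a : Kˣ) (v : V), cond v → cond (a • v)) :
    Nat.card {v : V // v ≠ 0 ∧ cond v} =
      Nat.card {P : Projectivization K V // cond P.rep} * (Fintype.card K - 1) := by
  classical
  have h1 : Nat.card Kˣ = Fintype.card K - 1 := by
    rw [Nat.card_eq_fintype_card, Fintype.card_units]
  rw [← Nat.card_congr (projEquiv cond hc), Nat.card_prod, h1]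

lemma card_vanish {K : Type} [Field K] [Fintype K] {n : ℕ} (s : Finset (Fin n)) :
    Nat.card {v : Fin n → K // ∀ i ∈ s, v i = 0} = Fintype.card K ^ (n - s.card) := by
  classical
  have e : {v : Fin n → K // ∀ i ∈ s, v i = 0} ≃ ({i : Fin n // i ∉ s} → K) :=
    { toFun := fun v i => v.1 i.1
      invFun := fun g => ⟨fun i => if h : i ∈ s then 0 else g ⟨i, h⟩, fun i hi => dif_pos hi⟩
      left_inv := fun v => Subtype.ext (funext fun i => by
        by_cases h : i ∈ s
        · simp [h, (v.2 i h).symm]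
        · simp [h])
      right_inv := fun g => funext fun i => dif_neg i.2 }
  rw [Nat.card_congr e, Nat.card_eq_fintype_card, Fintype.card_fun]
  congr 1
  rw [Fintype.card_subtype_compl, Fintype.card_fin, Fintype.card_coe]

lemma card_pred2 {K : Type} [Field K] [Fintype K] {n : ℕ} (p : K → K → Prop) :
    Nat.card {v : Fin (n+2) → K // p (v 0) (v 1)} =
      Nat.card {y : K × K // p y.1 y.2} * Fintype.card K ^ n := by
  classical
  have e : {y : K × K // p y.1 y.2} × (Fin n → K) ≃ {v : Fin (n+2) → K // p (v 0) (v 1)} :=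
    { toFun := fun x => ⟨Fin.cons x.1.1.1 (Fin.cons x.1.1.2 x.2), x.1.2⟩
      invFun := fun v => (⟨(v.1 0, v.1 1), v.2⟩, fun i => v.1 i.succ.succ)
      left_inv := fun x => rfl
      right_inv := fun v => by
        refine Subtype.ext (funext fun i => ?_)
        induction i using Fin.cases with
        | zero => simp [Fin.cons_zero]
        | succ j =>
          induction j using Fin.cases with
          | zero => simp [Fin.cons_succ, Fin.succ_zero_eq_one]
          | succ l => simp [Fin.cons_succ] }
  rw [← Nat.card_congr e, Nat.card_prod, Nat.card_eq_fintype_card (α := Fin n → K),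
    Fintype.card_fun, Fintype.card_fin]

lemma card_pairs {K : Type} [Field K] [Fintype K] {t : ℕ} (ht : 0 < t)
    (e : Fin t → K) (he : Function.Injective e) :
    Nat.card {y : K × K // ∃ j, y.2 = e j * y.1} = (Fintype.card K - 1) * t + 1 := by
  classical
  rw [Nat.card_congr (Equiv.subtypeProdEquivSigmaSubtype fun a b => ∃ j, b = e j * a),
    Nat.card_eq_fintype_card, Fintype.card_sigma]
  have key : ∀ a : K, Fintype.card {b : K // ∃ j, b = e j * a} = if a = 0 then 1 else t := by
    intro a
    rw [← Nat.card_eq_fintype_card]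
    have : {b : K // ∃ j, b = e j * a} ≃ (Set.range fun j => e j * a) :=
      Equiv.subtypeEquivRight (by intro b; simp [Set.mem_range, eq_comm])
    rw [Nat.card_congr this]
    haveI : Nonempty (Fin t) := ⟨⟨0, ht⟩⟩
    by_cases ha : a = 0
    · subst ha
      simp only [mul_zero]
      rw [Set.range_const]
      simp
    · rw [Nat.card_range_of_injective (fun j j' hjj => he (mul_right_cancel₀ ha hjj))]
      simp [ha, Nat.card_eq_fintype_card]
  simp only [key]
  rw [Finset.sum_ite, Finset.sum_const, Finset.sum_const,
    Finset.filter_eq' Finset.univ (0 : K)]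
  simp only [Finset.mem_univ, if_true, Finset.card_singleton, Finset.filter_ne',
    Finset.card_erase_of_mem (Finset.mem_univ (0 : K)), Finset.card_univ, smul_eq_mul,
    one_mul]
  ring

lemma geom_aux (r n : ℕ) : (∑ i ∈ Finset.range n, (r+1) ^ i) * r + 1 = (r+1) ^ n := by
  induction n with
  | zero => simp
  | succ n ih =>
    rw [Finset.sum_range_succ, add_mul, add_right_comm, ih, pow_succ]
    ring

lemma card_or_add_card_and {α : Type} [Fintype α] (p q : α → Prop) :
    Nat.card {x // p x ∨ q x} + Nat.card {x // p x ∧ q x}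
      = Nat.card {x // p x} + Nat.card {x // q x} := by
  classical
  simp_rw [Nat.card_eq_fintype_card, Fintype.card_subtype]
  rw [Finset.filter_or, Finset.filter_and]
  exact Finset.card_union_add_card_inter _ _

lemma card_remove_zero {V : Type} [Fintype V] [Zero V] (p : V → Prop) (h0 : p 0) :
    Nat.card {v : V // p v} = Nat.card {v : V // v ≠ 0 ∧ p v} + 1 := by
  classical
  simp_rw [Nat.card_eq_fintype_card, Fintype.card_subtype]
  have h : Finset.filter p Finset.univ
      = insert 0 (Finset.filter (fun v => v ≠ 0 ∧ p v) Finset.univ) := by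
    ext v
    by_cases hv : v = 0 <;> simp [hv, h0]
  rw [h, Finset.card_insert_of_notMem (by simp)]

lemma arith0 (r t y S : ℕ) (hS : S * r + 1 = y) :
    (t * y + S) * r + 1 = (r * t + 1) * y := by
  zify at hS ⊢
  linear_combination hS

lemma arith1 (r t x S : ℕ) (hS : S * r + 1 = x * (r+1) * (r+1)) :
    (t * (x * (r+1) * (r+1)) + S + x) * r + 1 + x
      = ((r * t + 1) * (x * (r+1) * (r+1)) + x * (r+1)) := by
  zify at hS ⊢
  linear_combination hS

/-- for `q ≥ 4`, `m ≥ 2` and `1 < d < q - 1`, there exist three linearly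
independent homogeneous polynomials of degree `d` in `F_q[x₀,…,x_m]` with exactly
`(d-1)q^(m-1) + p_(m-2) + ⌊q^(m-3)⌋` common zeros in `ℙ^m(F_q)`. -/
theorem statement_8 {Fq : Type} [Field Fq] [Fintype Fq] (q m d : ℕ)
    (hq : q = Fintype.card Fq) (hq4 : 4 ≤ q) (hm : 2 ≤ m) (hd1 : 1 < d)
    (hdq : d < q - 1) :
    ∃ F : Fin 3 → MvPolynomial (Fin (m+1)) Fq,
      (∀ i, (F i).IsHomogeneous d) ∧ LinearIndependent Fq F ∧
      Nat.card {P : Projectivization Fq (Fin (m+1) → Fq) | ∀ i, vanishesAt (F i) P} =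
        (d - 1) * q ^ (m - 1) + (∑ i ∈ Finset.range (m - 1), q ^ i)
          + (if 3 ≤ m then q ^ (m - 3) else 0) := by
  classical
  obtain ⟨t, rfl⟩ : ∃ t, d = t + 1 := ⟨d - 1, by omega⟩
  have ht : 0 < t := by omega
  obtain ⟨k, rfl⟩ : ∃ k, m = k + 2 := ⟨m - 2, by omega⟩
  obtain ⟨r, hqr, hrpos⟩ : ∃ r, Fintype.card Fq = r + 1 ∧ 0 < r :=
    ⟨Fintype.card Fq - 1, by omega, by omega⟩
  have hr1 : Fintype.card Fq - 1 = r := by omega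
  obtain ⟨ee⟩ : Nonempty (Fin t ↪ Fq) := by
    apply Function.Embedding.nonempty_of_card_le
    rw [Fintype.card_fin]
    omega
  set e : Fin t → Fq := fun j => ee j with he_def
  have he : Function.Injective e := ee.injective
  -- generic construction for any injective choice of three coordinates
  set G : MvPolynomial (Fin (k+3)) Fq := ∏ j : Fin t, (X 1 - C (e j) * X 0) with hG_def
  have hGhom : G.IsHomogeneous t := by
    have := MvPolynomial.IsHomogeneous.prod Finset.univ
      (fun j : Fin t => (X 1 - C (e j) * X 0 : MvPolynomial (Fin (k+3)) Fq)) (fun _ => 1)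
      (fun j _ => ((isHomogeneous_X _ _).sub (isHomogeneous_C_mul_X _ _)))
    simpa using this
  have hGeval : ∀ v : Fin (k+3) → Fq, eval v G = ∏ j : Fin t, (v 1 - e j * v 0) := by
    intro v
    rw [hG_def, map_prod]
    simp
  have hGne : G ≠ 0 := by
    intro h
    have h1 : eval (fun i : Fin (k+3) => if i = 1 then (1:Fq) else 0) G = 1 := by
      rw [hGeval]
      have : ∀ j : Fin t, ((if (1 : Fin (k+3)) = 1 then (1:Fq) else 0)
          - e j * (if (0 : Fin (k+3)) = 1 then (1:Fq) else 0)) = 1 := by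
        intro j
        rw [if_pos rfl, if_neg (by exact Fin.ne_of_val_ne (by norm_num))]
        ring
      rw [Finset.prod_congr rfl (fun j _ => this j)]
      simp
    rw [h] at h1
    simp at h1
  have main : ∀ l : Fin 3 → Fin (k+3), Function.Injective l →
      (∀ i, ((G * X (l i) : MvPolynomial (Fin (k+3)) Fq)).IsHomogeneous (t+1)) ∧
      LinearIndependent Fq (fun i => (G * X (l i) : MvPolynomial (Fin (k+3)) Fq)) ∧
      Nat.card {P : Projectivization Fq (Fin (k+3) → Fq) |
          ∀ i, vanishesAt (G * X (l i)) P} * (Fintype.card Fq - 1) =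
        Nat.card {v : Fin (k+3) → Fq // v ≠ 0 ∧
          ((∃ j, v 1 = e j * v 0) ∨ (∀ i : Fin 3, v (l i) = 0))} := by
    intro l hl
    have hFhom : ∀ i, ((G * X (l i) : MvPolynomial (Fin (k+3)) Fq)).IsHomogeneous (t+1) :=
      fun i => hGhom.mul (isHomogeneous_X _ _)
    refine ⟨hFhom, ?_, ?_⟩
    · rw [Fintype.linearIndependent_iff]
      intro g hg i
      have hsum : G * (∑ i, g i • X (l i)) = 0 := by
        rw [Finset.mul_sum]
        rw [← hg]
        congr 1
        ext i
        rw [mul_smul_comm]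
      have hzero : (∑ i, g i • (X (l i) : MvPolynomial (Fin (k+3)) Fq)) = 0 :=
        (mul_eq_zero.mp hsum).resolve_left hGne
      have := congrArg (eval (fun x : Fin (k+3) => if x = l i then (1:Fq) else 0)) hzero
      rw [map_sum] at this
      simp only [smul_eval, eval_X, map_zero] at this
      rw [Finset.sum_eq_single i] at this
      · simpa using this
      · intro b _ hb
        rw [if_neg (fun hc => hb (hl hc)), mul_zero]
      · simp
    · -- cardinality identity
      set cond : (Fin (k+3) → Fq) → Prop :=
        fun v => ((∃ j, v 1 = e j * v 0) ∨ (∀ i : Fin 3, v (l i) = 0)) with hcond_def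
      have hev : ∀ v : Fin (k+3) → Fq, (∀ i, eval v (G * X (l i)) = 0) ↔ cond v := by
        intro v
        have hfe : ∀ i, eval v (G * X (l i)) = (∏ j : Fin t, (v 1 - e j * v 0)) * v (l i) := by
          intro i
          rw [map_mul, hGeval, eval_X]
        constructor
        · intro h
          by_cases hGv : (∏ j : Fin t, (v 1 - e j * v 0)) = 0
          · left
            obtain ⟨j, _, hj⟩ := Finset.prod_eq_zero_iff.mp hGv
            exact ⟨j, by linear_combination hj⟩
          · right
            intro i
            have := h i
            rw [hfe i] at this
            exact (mul_eq_zero.mp this).resolve_left hGv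
        · rintro (⟨j, hj⟩ | h) i
          · rw [hfe i, Finset.prod_eq_zero (Finset.mem_univ j) (by linear_combination hj),
              zero_mul]
          · rw [hfe i, h i, mul_zero]
      have hinv : ∀ (a : Fqˣ) (v : Fin (k+3) → Fq), cond v → cond (a • v) := by
        rintro a v (⟨j, hj⟩ | h)
        · left
          exact ⟨j, by simp only [Pi.smul_apply, smul_eq_mul, Units.smul_def, hj]; ring⟩
        · right
          intro i
          simp [Units.smul_def, h i]
      have hiff : ∀ P : Projectivization Fq (Fin (k+3) → Fq),
          (∀ i, vanishesAt (G * X (l i)) P) ↔ cond P.rep := by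
        intro P
        constructor
        · intro h
          refine (hev P.rep).1 (fun i => h i ⟨P.rep, P.rep_nonzero⟩ ?_)
          rw [mk'_eq_mk, mk_rep]
        · intro hc i v hv
          rw [mk'_eq_mk, ← P.mk_rep, mk_eq_mk_iff] at hv
          obtain ⟨a, ha⟩ := hv
          have : cond (v : Fin (k+3) → Fq) := by
            rw [← ha]
            exact hinv a P.rep hc
          exact (hev v).2 this i
      have hset : Nat.card {P : Projectivization Fq (Fin (k+3) → Fq) |
          ∀ i, vanishesAt (G * X (l i)) P}
          = Nat.card {P : Projectivization Fq (Fin (k+3) → Fq) // cond P.rep} :=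
        Nat.card_congr (Equiv.subtypeEquivRight fun P => hiff P)
      rw [hset, ← card_cond_mul cond hinv]
  -- choose coordinates, split on k
  rcases Nat.eq_zero_or_pos k with hk0 | hkpos
  · -- m = 2
    subst hk0
    obtain ⟨h1, h2, h3⟩ := main id (fun a b h => h)
    rw [hr1] at h3
    refine ⟨fun i => G * X (id i : Fin 3), h1, h2, ?_⟩
    set Z := Nat.card {P : Projectivization Fq (Fin 3 → Fq) |
      ∀ i, vanishesAt (G * X (id i : Fin 3)) P} with hZ_def
    have hzrem : Nat.card {v : Fin 3 → Fq // v ≠ 0 ∧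
        ((∃ j, v 1 = e j * v 0) ∨ (∀ i : Fin 3, v (id i : Fin 3) = 0))}
        = Nat.card {v : Fin 3 → Fq // v ≠ 0 ∧ (∃ j, v 1 = e j * v 0)} := by
      apply Nat.card_congr
      apply Equiv.subtypeEquivRight
      intro v
      constructor
      · rintro ⟨hv, (h | h)⟩
        · exact ⟨hv, h⟩
        · exact absurd (funext fun i => h i) hv
      · rintro ⟨hv, h⟩
        exact ⟨hv, Or.inl h⟩
    have hA1 : Nat.card {v : Fin 3 → Fq // ∃ j, v 1 = e j * v 0}
        = (r * t + 1) * (r + 1) := by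
      rw [card_pred2 (n := 1) (fun a b => ∃ j, b = e j * a), card_pairs ht e he,
        pow_one, hr1, hqr]
    have hrem : Nat.card {v : Fin 3 → Fq // ∃ j, v 1 = e j * v 0}
        = Nat.card {v : Fin 3 → Fq // v ≠ 0 ∧ (∃ j, v 1 = e j * v 0)} + 1 :=
      card_remove_zero _ ⟨⟨0, ht⟩, by simp⟩
    have e1 : Z * r + 1 = (r * t + 1) * (r + 1) := by
      rw [← hA1, hrem, ← hzrem, ← h3]
    have e2 : (t * (r + 1) + 1) * r + 1 = (r * t + 1) * (r + 1) := by ring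
    have hZval : Z = t * (r + 1) + 1 :=
      Nat.eq_of_mul_eq_mul_right hrpos (Nat.add_right_cancel (e1.trans e2.symm))
    rw [hZval, if_neg (by decide : ¬ (3 ≤ 0 + 2)),
      show (0:ℕ) + 2 - 1 = 1 from rfl, show t + 1 - 1 = t from rfl,
      Finset.sum_range_one, pow_zero, pow_one, hq, hqr, add_zero]
  · -- m ≥ 3
    obtain ⟨k', rfl⟩ : ∃ k', k = k' + 1 := ⟨k - 1, by omega⟩
    have hb0 : (0:ℕ) < k' + 4 := Nat.lt_of_lt_of_le (by decide) (Nat.le_add_left 4 k')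
    have hb1 : (1:ℕ) < k' + 4 := Nat.lt_of_lt_of_le (by decide) (Nat.le_add_left 4 k')
    have hb2 : (2:ℕ) < k' + 4 := Nat.lt_of_lt_of_le (by decide) (Nat.le_add_left 4 k')
    have hb3 : (3:ℕ) < k' + 4 := Nat.lt_of_lt_of_le (by decide) (Nat.le_add_left 4 k')
    set c0 : Fin (k' + 4) := ⟨0, hb0⟩ with hc0
    set c1 : Fin (k' + 4) := ⟨1, hb1⟩ with hc1
    set c2 : Fin (k' + 4) := ⟨2, hb2⟩ with hc2
    set c3 : Fin (k' + 4) := ⟨3, hb3⟩ with hc3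
    have hl : Function.Injective ![c0, c2, c3] := by
      intro a b hab
      fin_cases a <;> fin_cases b <;> first
        | rfl
        | (rw [Fin.ext_iff] at hab; simp [hc0, hc2, hc3] at hab)
    obtain ⟨h1, h2, h3⟩ := main ![c0, c2, c3] hl
    rw [hr1] at h3
    refine ⟨fun i => G * X (![c0, c2, c3] i), h1, h2, ?_⟩
    set Z := Nat.card {P : Projectivization Fq (Fin (k' + 4) → Fq) |
      ∀ i, vanishesAt (G * X (![c0, c2, c3] i)) P} with hZ_def
    have hA2iff : ∀ v : Fin (k' + 4) → Fq,
        (∀ i : Fin 3, v (![c0, c2, c3] i) = 0) ↔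
          (∀ i ∈ ({c0, c2, c3} : Finset (Fin (k' + 4))), v i = 0) := by
      intro v
      constructor
      · intro h i hi
        simp only [Finset.mem_insert, Finset.mem_singleton] at hi
        rcases hi with rfl | rfl | rfl
        · exact h 0
        · exact h 1
        · exact h 2
      · intro h i
        fin_cases i
        · exact h c0 (by simp)
        · exact h c2 (by simp)
        · exact h c3 (by simp)
    have hA1 : Nat.card {v : Fin (k' + 4) → Fq // ∃ j, v 1 = e j * v 0}
        = (r * t + 1) * (r + 1) ^ (k' + 2) := by
      rw [card_pred2 (n := k' + 2) (fun a b => ∃ j, b = e j * a), card_pairs ht e he,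
        hr1, hqr]
    have hs3card : ({c0, c2, c3} : Finset (Fin (k' + 4))).card = 3 := by
      rw [Finset.card_insert_of_notMem (by simp [hc0, hc2, hc3, Fin.ext_iff]),
        Finset.card_insert_of_notMem (by simp [hc2, hc3, Fin.ext_iff]),
        Finset.card_singleton]
    have hs4card : ({c0, c1, c2, c3} : Finset (Fin (k' + 4))).card = 4 := by
      rw [Finset.card_insert_of_notMem (by simp [hc0, hc1, hc2, hc3, Fin.ext_iff]),
        Finset.card_insert_of_notMem (by simp [hc1, hc2, hc3, Fin.ext_iff]),
        Finset.card_insert_of_notMem (by simp [hc2, hc3, Fin.ext_iff]),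
        Finset.card_singleton]
    have hA2 : Nat.card {v : Fin (k' + 4) → Fq // ∀ i : Fin 3, v (![c0, c2, c3] i) = 0}
        = (r + 1) ^ (k' + 1) := by
      rw [Nat.card_congr (Equiv.subtypeEquivRight hA2iff), card_vanish, hs3card,
        show k' + 4 - 3 = k' + 1 from rfl, hqr]
    have hand : Nat.card {v : Fin (k' + 4) → Fq //
        (∃ j, v 1 = e j * v 0) ∧ (∀ i : Fin 3, v (![c0, c2, c3] i) = 0)}
        = (r + 1) ^ k' := by
      have hiff : ∀ v : Fin (k' + 4) → Fq,
          ((∃ j, v 1 = e j * v 0) ∧ (∀ i : Fin 3, v (![c0, c2, c3] i) = 0)) ↔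
            (∀ i ∈ ({c0, c1, c2, c3} : Finset (Fin (k' + 4))), v i = 0) := by
        intro v
        constructor
        · rintro ⟨⟨j, hj⟩, h2⟩ i hi
          rw [hA2iff] at h2
          simp only [Finset.mem_insert, Finset.mem_singleton] at hi
          rcases hi with rfl | rfl | rfl | rfl
          · exact h2 c0 (by simp)
          · rw [show v c1 = v 1 from rfl, hj,
              show v 0 = 0 from h2 c0 (by simp), mul_zero]
          · exact h2 c2 (by simp)
          · exact h2 c3 (by simp)
        · intro h
          refine ⟨⟨⟨0, ht⟩, ?_⟩, (hA2iff v).2 fun i hi => h i ?_⟩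
          · rw [show v 1 = 0 from h c1 (by simp), show v 0 = 0 from h c0 (by simp),
              mul_zero]
          · simp only [Finset.mem_insert, Finset.mem_singleton] at hi ⊢
            tauto
      rw [Nat.card_congr (Equiv.subtypeEquivRight hiff), card_vanish, hs4card,
        show k' + 4 - 4 = k' from rfl, hqr]
    have hor := card_or_add_card_and (fun v : Fin (k' + 4) → Fq => ∃ j, v 1 = e j * v 0)
      (fun v => ∀ i : Fin 3, v (![c0, c2, c3] i) = 0)
    have hrem : Nat.card {v : Fin (k' + 4) → Fq //
        (∃ j, v 1 = e j * v 0) ∨ (∀ i : Fin 3, v (![c0, c2, c3] i) = 0)}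
        = Nat.card {v : Fin (k' + 4) → Fq // v ≠ 0 ∧
          ((∃ j, v 1 = e j * v 0) ∨ (∀ i : Fin 3, v (![c0, c2, c3] i) = 0))} + 1 :=
      card_remove_zero _ (Or.inl ⟨⟨0, ht⟩, by simp⟩)
    have e1 : Z * r + 1 + (r + 1) ^ k'
        = (r * t + 1) * (r + 1) ^ (k' + 2) + (r + 1) ^ (k' + 1) := by
      rw [h3, ← hrem, ← hand, hor, hA1, hA2]
    set S := ∑ i ∈ Finset.range (k' + 2), (r + 1) ^ i with hS_def
    have hS : S * r + 1 = (r + 1) ^ k' * (r + 1) * (r + 1) := by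
      rw [hS_def, geom_aux]
      ring
    have e2 : (t * ((r + 1) ^ k' * (r + 1) * (r + 1)) + S + (r + 1) ^ k') * r + 1
          + (r + 1) ^ k'
        = (r * t + 1) * (r + 1) ^ (k' + 2) + (r + 1) ^ (k' + 1) := by
      rw [arith1 r t ((r + 1) ^ k') S hS]
      ring
    have hZval : Z = t * ((r + 1) ^ k' * (r + 1) * (r + 1)) + S + (r + 1) ^ k' :=
      Nat.eq_of_mul_eq_mul_right hrpos (by
        have h12 := e1.trans e2.symm
        rw [add_assoc (Z * r), add_assoc] at h12
        exact Nat.add_right_cancel h12)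
    rw [hZval, if_pos (Nat.le_add_left 3 k' : (3:ℕ) ≤ k' + 1 + 2),
      show k' + 1 + 2 - 1 = k' + 2 from rfl, show k' + 1 + 2 - 3 = k' from rfl,
      show t + 1 - 1 = t from rfl, hq, hqr, hS_def]
    ring
end

section
/- Let $q$ be a prime power, $m \ge 2$, $1 < \delta < q - 2$, and suppose that for every triple of linearly independent homogeneous polynomials of degree $\delta + 1$ in $\mathbb{F}_q[x_0, \ldots, x_m]$ the number of common projective zeros is at most $\delta q^{m-1} + p_{m-2} + \lfloor q^{m-3} \rfloor$. Then for any three linearly independent polynomials $f_1, f_2, f_3 \in \mathbb{F}_q[x_1, \ldots, x_m]$ of degree at most $\delta$, the number of common zeros in $\mathbb{F}_q^m$ is at most $(\delta - 1)q^{m-1} + \lfloor q^{m-3} \rfloor$. -/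
open MvPolynomial

namespace HPaux

lemma degree_sum_eq {σ : Type*} (d : σ →₀ ℕ) : d.degree = d.sum fun _ k => k := rfl

/-- exponent vector embedding -/
noncomputable def emb (δ : ℕ) {m : ℕ} (d : Fin m →₀ ℕ) : Fin (m+1) →₀ ℕ :=
  Finsupp.single 0 (δ + 1 - d.degree) + d.mapDomain Fin.succ

lemma emb_apply_succ (δ : ℕ) {m : ℕ} (d : Fin m →₀ ℕ) (i : Fin m) :
    emb δ d i.succ = d i := by
  rw [emb, Finsupp.add_apply, Finsupp.single_apply,
    if_neg (fun h => (Fin.succ_ne_zero i) h.symm),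
    Finsupp.mapDomain_apply (Fin.succ_injective m), zero_add]

lemma emb_injective (δ : ℕ) {m : ℕ} : Function.Injective (emb δ (m := m)) := by
  intro d d' h
  ext i
  rw [← emb_apply_succ δ d i, ← emb_apply_succ δ d' i, h]

lemma emb_degree (δ : ℕ) {m : ℕ} (d : Fin m →₀ ℕ) (hd : d.degree ≤ δ) :
    (emb δ d).degree = δ + 1 := by
  rw [emb, Finsupp.degree_eq_weight_one, map_add, ← Finsupp.degree_eq_weight_one]
  have h1 : (Finsupp.single (0 : Fin (m+1)) (δ + 1 - d.degree)).degree = δ + 1 - d.degree := by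
    rw [degree_sum_eq, Finsupp.sum_single_index]; rfl
  have h2 : (d.mapDomain Fin.succ).degree = d.degree := by
    rw [degree_sum_eq, degree_sum_eq, Finsupp.sum_mapDomain_index] <;> simp
  rw [h1, h2]
  omega

variable {Fq : Type} [Field Fq]

/-- Homogenization-with-x₀-factor. -/
noncomputable def Phi (δ : ℕ) {m : ℕ} (p : MvPolynomial (Fin m) Fq) :
    MvPolynomial (Fin (m+1)) Fq :=
  ∑ d ∈ p.support, monomial (emb δ d) (coeff d p)

lemma coeff_Phi (δ : ℕ) {m : ℕ} (p : MvPolynomial (Fin m) Fq) (d : Fin m →₀ ℕ) :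
    coeff (emb δ d) (Phi δ p) = coeff d p := by
  rw [Phi, coeff_sum]
  rw [Finset.sum_eq_single d]
  · simp [coeff_monomial]
  · intro b _ hbd
    rw [coeff_monomial, if_neg (fun h => hbd (emb_injective δ h))]
  · intro hd
    simp [notMem_support_iff.mp hd]

lemma Phi_isHomogeneous (δ : ℕ) {m : ℕ} (p : MvPolynomial (Fin m) Fq)
    (hp : p.totalDegree ≤ δ) : (Phi δ p).IsHomogeneous (δ + 1) := by
  rw [← mem_homogeneousSubmodule, Phi]
  apply Submodule.sum_mem
  intro d hd
  rw [mem_homogeneousSubmodule]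
  apply isHomogeneous_monomial
  apply emb_degree
  exact le_trans (le_totalDegree hd) hp

lemma eval_Phi_cons (δ : ℕ) {m : ℕ} (p : MvPolynomial (Fin m) Fq) (x : Fin m → Fq) :
    eval (Fin.cons 1 x) (Phi δ p) = eval x p := by
  rw [Phi, map_sum]
  conv_rhs => rw [p.as_sum, map_sum]
  apply Finset.sum_congr rfl
  intro d _
  rw [eval_monomial, eval_monomial, emb,
    Finsupp.prod_add_index' (fun _ => pow_zero _) (fun _ _ _ => pow_add _ _ _),
    Finsupp.prod_mapDomain_index_inj (Fin.succ_injective m)]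
  have hs : (Finsupp.single (0 : Fin (m+1)) (δ + 1 - d.degree)).prod
      (fun i k => (Fin.cons 1 x : Fin (m+1) → Fq) i ^ k) = (1:Fq) := by
    have := Finsupp.prod_single_index (a := (0 : Fin (m+1))) (b := δ + 1 - d.degree)
      (h := fun i k => (Fin.cons 1 x : Fin (m+1) → Fq) i ^ k) (by simp)
    rw [this]
    simp
  rw [hs, one_mul]
  simp [Fin.cons_succ]

lemma eval_Phi_zero (δ : ℕ) {m : ℕ} (p : MvPolynomial (Fin m) Fq)
    (hp : p.totalDegree ≤ δ) (v : Fin (m+1) → Fq) (hv : v 0 = 0) :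
    eval v (Phi δ p) = 0 := by
  rw [Phi, map_sum]
  apply Finset.sum_eq_zero
  intro d hd
  rw [eval_monomial, emb,
    Finsupp.prod_add_index' (fun _ => pow_zero _) (fun _ _ _ => pow_add _ _ _)]
  have h1 : δ + 1 - d.degree ≠ 0 := by
    have : d.degree ≤ δ := le_trans (le_totalDegree hd) hp
    omega
  have hs : (Finsupp.single (0 : Fin (m+1)) (δ + 1 - d.degree)).prod
      (fun i k => v i ^ k) = (0:Fq) := by
    have := Finsupp.prod_single_index (a := (0 : Fin (m+1))) (b := δ + 1 - d.degree)
      (h := fun i k => v i ^ k) (by simp)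
    rw [this]
    simp [hv, zero_pow h1]
  rw [hs, zero_mul, mul_zero]

lemma eval_smul_of_homog {n m : ℕ} {F : MvPolynomial (Fin m) Fq} (hF : F.IsHomogeneous n)
    (c : Fq) (v : Fin m → Fq) : eval (c • v) F = c ^ n * eval v F := by
  conv_lhs => rw [F.as_sum, map_sum]
  conv_rhs => rw [F.as_sum, map_sum, Finset.mul_sum]
  apply Finset.sum_congr rfl
  intro d hd
  rw [eval_monomial, eval_monomial]
  have hdeg : d.degree = n := by
    have := hF (mem_support_iff.mp hd)
    rwa [Finsupp.degree_eq_weight_one]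
  rw [← hdeg]
  rw [Finsupp.prod, Finsupp.prod]
  simp only [Pi.smul_apply, smul_eq_mul, mul_pow]
  rw [Finset.prod_mul_distrib, Finset.prod_pow_eq_pow_sum]
  rw [Finsupp.degree_apply]
  ring

lemma geom_aux (q : ℕ) (hq : 1 ≤ q) : ∀ m : ℕ,
    (∑ i ∈ Finset.range m, q ^ i) * (q - 1) + 1 = q ^ m := by
  intro m
  obtain ⟨r, rfl⟩ : ∃ r, q = r + 1 := ⟨q - 1, by omega⟩
  induction m with
  | zero => simp
  | succ m ih =>
    rw [Finset.sum_range_succ, add_mul, pow_succ]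
    simp only [Nat.add_sub_cancel] at *
    nlinarith [ih]

/-- cardinality of the hyperplane in projective space -/
lemma card_hyperplane {Fq : Type} [Field Fq] [Fintype Fq] (m : ℕ) :
    (Set.image (Projectivization.mk' Fq) {v : {w : Fin (m+1) → Fq // w ≠ 0} | v.1 0 = 0}).ncard
      = ∑ i ∈ Finset.range m, Fintype.card Fq ^ i := by
  classical
  haveI : Finite (Projectivization Fq (Fin (m+1) → Fq)) :=
    (Quotient.finite _ : Finite (Quotient (projectivizationSetoid Fq (Fin (m+1) → Fq))))
  haveI : Fintype (Projectivization Fq (Fin (m+1) → Fq)) := Fintype.ofFinite _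
  set q := Fintype.card Fq with hqdef
  have hq2 : 2 ≤ q := Fintype.one_lt_card
  set S : Set {w : Fin (m+1) → Fq // w ≠ 0} := {v | v.1 0 = 0} with hSdef
  set H := Set.image (Projectivization.mk' Fq) S with hHdef
  have hST : ∀ v ∈ S.toFinset, Projectivization.mk' Fq v ∈ H.toFinset := by
    intro v hv
    rw [Set.mem_toFinset] at hv ⊢
    exact ⟨v, hv, rfl⟩
  have hcount := Finset.card_eq_sum_card_fiberwise hST
  have hfiber : ∀ P ∈ H.toFinset,
      (S.toFinset.filter fun v => Projectivization.mk' Fq v = P).card = q - 1 := by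
    intro P hP
    rw [Set.mem_toFinset] at hP
    obtain ⟨u, hu, rfl⟩ := hP
    have : (Finset.univ : Finset Fqˣ).card
        = (S.toFinset.filter fun v => Projectivization.mk' Fq v = Projectivization.mk' Fq u).card := by
      apply Finset.card_bij
        (i := fun (c : Fqˣ) _ => (⟨(c : Fq) • u.1, smul_ne_zero (Units.ne_zero c) u.2⟩ :
          {w : Fin (m+1) → Fq // w ≠ 0}))
      · intro c _
        rw [Finset.mem_filter, Set.mem_toFinset]
        constructor
        · show ((c : Fq) • u.1) 0 = 0
          rw [Pi.smul_apply, show u.1 0 = 0 from hu, smul_zero]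
        · simp only [Projectivization.mk'_eq_mk]
          rw [Projectivization.mk_eq_mk_iff']
          exact ⟨c, rfl⟩
      · intro c _ c' _ hcc
        obtain ⟨j, hj⟩ := Function.ne_iff.mp u.2
        have := congrFun (congrArg Subtype.val hcc) j
        simp only [Pi.smul_apply, smul_eq_mul] at this
        exact Units.ext (mul_right_cancel₀ (by simpa using hj) this)
      · intro v hv
        rw [Finset.mem_filter, Set.mem_toFinset] at hv
        have h2 := hv.2
        simp only [Projectivization.mk'_eq_mk] at h2
        rw [Projectivization.mk_eq_mk_iff] at h2
        obtain ⟨a, ha⟩ := h2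
        refine ⟨a, Finset.mem_univ _, ?_⟩
        apply Subtype.ext
        rw [← ha, Units.smul_def]
    rw [← this, Finset.card_univ, Fintype.card_units]
  rw [Finset.sum_congr rfl hfiber, Finset.sum_const, smul_eq_mul] at hcount
  -- S.toFinset.card = q ^ m - 1
  have hE : S.toFinset.card = q ^ m - 1 := by
    rw [Set.toFinset_card]
    have e : S ≃ {y : Fin m → Fq // y ≠ 0} := by
      refine ⟨fun v => ⟨Fin.tail v.1.1, fun h => v.1.2 (funext fun i => ?_)⟩,
        fun y => ⟨⟨Fin.cons 0 y.1, fun h => y.2 (funext fun i => by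
          simpa using congrFun h i.succ)⟩, by simp [hSdef]⟩,
        fun v => ?_, fun y => ?_⟩
      · refine Fin.cases ?_ (fun j => ?_) i
        · exact (show v.1.1 0 = 0 from v.2)
        · have := congrFun h j
          simpa [Fin.tail] using this
      · apply Subtype.ext
        apply Subtype.ext
        funext i
        dsimp only
        refine Fin.cases ?_ (fun j => ?_) i
        · rw [Fin.cons_zero]
          exact (show v.1.1 0 = 0 from v.2).symm
        · rw [Fin.cons_succ]
          rfl
      · apply Subtype.ext
        dsimp only
        exact Fin.tail_cons _ _
    rw [Fintype.card_congr e, Fintype.card_subtype_compl]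
    rw [Fintype.card_subtype_eq (0 : Fin m → Fq)]
    simp [hqdef]
  have hgeom := geom_aux q (by omega) m
  have hpos : 0 < q ^ m := pow_pos (by omega : 0 < q) m
  have hH : H.ncard = H.toFinset.card := Set.ncard_eq_toFinset_card' H
  rw [hH]
  have : H.toFinset.card * (q - 1) = (∑ i ∈ Finset.range m, q ^ i) * (q - 1) := by omega
  exact Nat.eq_of_mul_eq_mul_right (by omega) this

end HPaux


/-- if every triple of linearly independent homogeneous polynomials of
degree `δ+1` in `m+1` variables has at most `δq^(m-1) + p_(m-2) + ⌊q^(m-3)⌋` common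
projective zeros, then any three linearly independent polynomials of degree `≤ δ` in
`m` variables have at most `(δ-1)q^(m-1) + ⌊q^(m-3)⌋` common zeros in `F_q^m`. -/
theorem statement_9 {Fq : Type} [Field Fq] [Fintype Fq] (q m δ : ℕ)
    (hq : q = Fintype.card Fq) (hm : 2 ≤ m) (hδ1 : 1 < δ) (hδq : δ < q - 2)
    (hproj : ∀ F : Fin 3 → MvPolynomial (Fin (m+1)) Fq,
      (∀ i, (F i).IsHomogeneous (δ + 1)) → LinearIndependent Fq F →
      Nat.card {P : Projectivization Fq (Fin (m+1) → Fq) | ∀ i, vanishesAt (F i) P} ≤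
        δ * q ^ (m - 1) + (∑ i ∈ Finset.range (m - 1), q ^ i)
          + (if 3 ≤ m then q ^ (m - 3) else 0)) :
    ∀ f : Fin 3 → MvPolynomial (Fin m) Fq,
      (∀ i, (f i).totalDegree ≤ δ) → LinearIndependent Fq f →
      Nat.card {x : Fin m → Fq | ∀ i, MvPolynomial.eval x (f i) = 0} ≤
        (δ - 1) * q ^ (m - 1) + (if 3 ≤ m then q ^ (m - 3) else 0) := by
  intro f hdeg hli
  classical
  haveI : Finite (Projectivization Fq (Fin (m+1) → Fq)) :=
    (Quotient.finite _ : Finite (Quotient (projectivizationSetoid Fq (Fin (m+1) → Fq))))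
  set F : Fin 3 → MvPolynomial (Fin (m+1)) Fq := fun i => HPaux.Phi δ (f i) with hFdef
  have hFhom : ∀ i, (F i).IsHomogeneous (δ+1) :=
    fun i => HPaux.Phi_isHomogeneous δ (f i) (hdeg i)
  have hFli : LinearIndependent Fq F := by
    rw [Fintype.linearIndependent_iff] at hli ⊢
    intro g hg
    refine hli g ?_
    apply MvPolynomial.ext
    intro d
    have h0 : coeff (HPaux.emb δ d) (∑ i, g i • F i) = 0 := by rw [hg]; simp
    rw [coeff_sum] at h0
    simp only [coeff_smul, smul_eq_mul, hFdef, HPaux.coeff_Phi] at h0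
    rw [coeff_sum]
    simp only [coeff_smul, smul_eq_mul, h0, coeff_zero]
  have hbound := hproj F hFhom hFli
  set Z : Set (Projectivization Fq (Fin (m+1) → Fq)) := {P | ∀ i, vanishesAt (F i) P} with hZdef
  set A : Set (Fin m → Fq) := {x | ∀ i, MvPolynomial.eval x (f i) = 0} with hAdef
  have hcne : ∀ x : Fin m → Fq, (Fin.cons 1 x : Fin (m+1) → Fq) ≠ 0 := by
    intro x h
    have := congrFun h 0
    rw [Fin.cons_zero] at this
    exact one_ne_zero this
  set e : (Fin m → Fq) → Projectivization Fq (Fin (m+1) → Fq) :=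
    fun x => Projectivization.mk Fq (Fin.cons 1 x) (hcne x) with hedef
  set S : Set {w : Fin (m+1) → Fq // w ≠ 0} := {v | v.1 0 = 0} with hSdef
  set H := Set.image (Projectivization.mk' Fq) S with hHdef
  -- A' ⊆ Z
  have hA'Z : e '' A ⊆ Z := by
    rintro _ ⟨x, hx, rfl⟩
    intro i
    intro v hv
    rw [Projectivization.mk'_eq_mk, hedef] at hv
    rw [Projectivization.mk_eq_mk_iff'] at hv
    obtain ⟨a, ha⟩ := hv
    rw [← ha, HPaux.eval_smul_of_homog (hFhom i), HPaux.eval_Phi_cons, hx i, mul_zero]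
  -- H ⊆ Z
  have hHZ : H ⊆ Z := by
    rintro _ ⟨u, hu, rfl⟩
    intro i v hv
    rw [Projectivization.mk'_eq_mk, Projectivization.mk'_eq_mk,
      Projectivization.mk_eq_mk_iff'] at hv
    obtain ⟨a, ha⟩ := hv
    apply HPaux.eval_Phi_zero δ (f i) (hdeg i)
    rw [← ha, Pi.smul_apply, show u.1 0 = 0 from hu, smul_zero]
  -- e injective
  have einj : Function.Injective e := by
    intro x x' h
    rw [hedef] at h
    rw [Projectivization.mk_eq_mk_iff'] at h
    obtain ⟨a, ha⟩ := h
    have h0 := congrFun ha 0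
    simp only [Pi.smul_apply, Fin.cons_zero, smul_eq_mul, mul_one] at h0
    funext i
    have hi := congrFun ha i.succ
    simp only [Pi.smul_apply, Fin.cons_succ, smul_eq_mul, h0, one_mul] at hi
    exact hi.symm
  -- disjoint
  have hdisj : Disjoint (e '' A) H := by
    rw [Set.disjoint_left]
    rintro _ ⟨x, _, rfl⟩ ⟨u, hu, hux⟩
    rw [Projectivization.mk'_eq_mk, hedef, Projectivization.mk_eq_mk_iff'] at hux
    obtain ⟨a, ha⟩ := hux
    have h0 := congrFun ha 0
    have h1 : (Fin.cons 1 x : Fin (m+1) → Fq) 0 = 1 := Fin.cons_zero _ _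
    rw [Pi.smul_apply, h1, smul_eq_mul, mul_one, show u.1 0 = 0 from hu] at h0
    apply u.2
    rw [← ha, h0, zero_smul]
  -- counting
  have hunion : (e '' A ∪ H) ⊆ Z := Set.union_subset hA'Z hHZ
  have hcard1 : A.ncard + H.ncard ≤ Z.ncard := by
    rw [← Set.ncard_image_of_injective A einj,
      ← Set.ncard_union_eq hdisj (Set.toFinite _) (Set.toFinite _)]
    exact Set.ncard_le_ncard hunion (Set.toFinite _)
  have hH : H.ncard = ∑ i ∈ Finset.range m, q ^ i := by
    rw [hHdef, hSdef, HPaux.card_hyperplane m, hq]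
  have hZb : Z.ncard ≤ δ * q ^ (m - 1) + (∑ i ∈ Finset.range (m - 1), q ^ i)
      + (if 3 ≤ m then q ^ (m - 3) else 0) := by
    rw [← Nat.card_coe_set_eq]
    exact hbound
  have hsplit : ∑ i ∈ Finset.range m, q ^ i
      = ∑ i ∈ Finset.range (m-1), q ^ i + q ^ (m-1) := by
    conv_lhs => rw [show m = (m-1) + 1 by omega]
    rw [Finset.sum_range_succ]
  have hδQ : δ * q ^ (m-1) = (δ-1) * q ^ (m-1) + q ^ (m-1) := by
    have h1 : δ - 1 + 1 = δ := by omega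
    rw [← h1, add_mul, one_mul, h1]
  rw [Nat.card_coe_set_eq]
  show A.ncard ≤ _
  rw [hH, hsplit] at hcard1
  rw [hδQ] at hZb
  omega
end

section
/- Let $q$ be a prime power, $m \ge 1$, $1 \le d < q$, and $k = \binom{m+d}{d}$. For $1 \le r \le k$, let $e_r^{\mathbb{A}}(d, m)$ be the maximum number of common zeros in $\mathbb{F}_q^m$ of $r$ linearly independent polynomials in $\mathbb{F}_q[x_1, \ldots, x_m]$ of degree at most $d$. Then $e_r^{\mathbb{A}}(d, m) \le dq^{m-1} - r + 1$. -/
open MvPolynomial Finset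

variable {F : Type} [Field F] [Fintype F] [DecidableEq F]

/-- DLSZ / Ore bound, multiplied by `q` to avoid natural subtraction in the exponent. -/
lemma ore_aux : ∀ (n : ℕ) (p : MvPolynomial (Fin n) F), p ≠ 0 →
    (Finset.univ.filter fun x : Fin n → F => eval x p = 0).card * Fintype.card F ≤
      p.totalDegree * (Fintype.card F) ^ n := by
  intro n
  induction n with
  | zero =>
    intro p hp
    have he : (Finset.univ.filter fun x : Fin 0 → F => eval x p = 0) = ∅ := by
      rw [Finset.filter_eq_empty_iff]
      intro x _
      rw [show p = C (p.coeff 0) from MvPolynomial.eq_C_of_isEmpty p, eval_C]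
      intro h
      exact hp (by rw [MvPolynomial.eq_C_of_isEmpty p, h, map_zero])
    rw [he]
    simp
  | succ n ih =>
    intro p hp
    classical
    set q := Fintype.card F with hq
    set k := (finSuccEquiv F n p).natDegree with hk
    set c := (finSuccEquiv F n p).coeff k with hc
    have hpne : finSuccEquiv F n p ≠ 0 := by
      simpa using (map_ne_zero_iff _ (finSuccEquiv F n).injective).mpr hp
    have hcne : c ≠ 0 := by
      simpa [hc, hk] using Polynomial.leadingCoeff_ne_zero.mpr hpne
    have hck : c.totalDegree + k ≤ p.totalDegree :=
      totalDegree_coeff_finSuccEquiv_add_le p k hcne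
    -- count zeros fiberwise
    have key : (Finset.univ.filter fun v : Fin (n+1) → F => eval v p = 0).card =
        ∑ x : Fin n → F, (Finset.univ.filter fun y : F =>
          Polynomial.eval y (Polynomial.map (eval x) (finSuccEquiv F n p)) = 0).card := by
      simp only [Finset.card_filter]
      rw [← Equiv.sum_comp (Fin.consEquiv (fun _ : Fin (n+1) => F))
        (fun v => if eval v p = 0 then (1:ℕ) else 0)]
      rw [Fintype.sum_prod_type]
      rw [Finset.sum_comm]
      congr 1
      ext x
      congr 1
      ext y
      rw [show (Fin.consEquiv (fun _ : Fin (n+1) => F)) (y, x) = Fin.cons y x from rfl]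
      rw [eval_eq_eval_mv_eval']
    rw [key]
    -- bound each fiber
    have fiber_bound : ∀ x : Fin n → F,
        (Finset.univ.filter fun y : F =>
          Polynomial.eval y (Polynomial.map (eval x) (finSuccEquiv F n p)) = 0).card ≤
        if eval x c = 0 then q else k := by
      intro x
      by_cases hx : eval x c = 0
      · simp only [hx, if_pos]
        exact (Finset.card_filter_le _ _).trans (by simp [hq])
      · simp only [hx, if_neg, if_false]
        set P := Polynomial.map (eval x) (finSuccEquiv F n p) with hP
        have hPk : P.coeff k ≠ 0 := by
          rw [hP, Polynomial.coeff_map]; exact hx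
        have hP0 : P ≠ 0 := fun h => hPk (by simp [h])
        have hsub : (Finset.univ.filter fun y : F => Polynomial.eval y P = 0) ⊆
            P.roots.toFinset := by
          intro y hy
          simp only [Finset.mem_filter] at hy
          simp [Multiset.mem_toFinset, Polynomial.mem_roots, hP0, Polynomial.IsRoot, hy.2]
        calc (Finset.univ.filter fun y : F => Polynomial.eval y P = 0).card
            ≤ P.roots.toFinset.card := Finset.card_le_card hsub
          _ ≤ Multiset.card P.roots := Multiset.toFinset_card_le _
          _ ≤ P.natDegree := Polynomial.card_roots' P
          _ ≤ k := by rw [hk]; exact Polynomial.natDegree_map_le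
    calc (∑ x : Fin n → F, (Finset.univ.filter fun y : F =>
          Polynomial.eval y (Polynomial.map (eval x) (finSuccEquiv F n p)) = 0).card) * q
        ≤ (∑ x : Fin n → F, if eval x c = 0 then q else k) * q := by
          exact Nat.mul_le_mul_right _ (Finset.sum_le_sum fun x _ => fiber_bound x)
      _ = ((Finset.univ.filter fun x : Fin n → F => eval x c = 0).card * q
            + (Finset.univ.filter fun x : Fin n → F => ¬ eval x c = 0).card * k) * q := by
          rw [← Finset.sum_filter_add_sum_filter_not Finset.univ (fun x => eval x c = 0)]
          have e1 : ∑ x ∈ Finset.univ.filter (fun x : Fin n → F => eval x c = 0),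
              (if eval x c = 0 then q else k) =
              (Finset.univ.filter fun x : Fin n → F => eval x c = 0).card * q := by
            rw [Finset.sum_congr rfl fun x hx => if_pos (Finset.mem_filter.mp hx).2,
              Finset.sum_const, smul_eq_mul]
          have e2 : ∑ x ∈ Finset.univ.filter (fun x : Fin n → F => ¬ eval x c = 0),
              (if eval x c = 0 then q else k) =
              (Finset.univ.filter fun x : Fin n → F => ¬ eval x c = 0).card * k := by
            rw [Finset.sum_congr rfl fun x hx => if_neg (Finset.mem_filter.mp hx).2,
              Finset.sum_const, smul_eq_mul]
          rw [e1, e2]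
      _ ≤ (c.totalDegree * q ^ n + q ^ n * k) * q := by
          apply Nat.mul_le_mul_right
          apply Nat.add_le_add
          · exact ih c hcne
          · apply Nat.mul_le_mul_right
            exact (Finset.card_filter_le _ _).trans (by simp [hq])
      _ ≤ p.totalDegree * q ^ (n + 1) := by
          have : c.totalDegree * q ^ n + q ^ n * k = (c.totalDegree + k) * q ^ n := by ring
          rw [this, pow_succ]
          rw [← mul_assoc]
          exact Nat.mul_le_mul_right _ (Nat.mul_le_mul_right _ hck)

/-- Ore's bound in usable form. -/
lemma ore_bound {m d : ℕ} (hm : 1 ≤ m) (p : MvPolynomial (Fin m) F) (hp : p ≠ 0)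
    (hpd : p.totalDegree ≤ d) :
    (Finset.univ.filter fun x : Fin m → F => eval x p = 0).card ≤
      d * (Fintype.card F) ^ (m - 1) := by
  have hq : 0 < Fintype.card F := Fintype.card_pos
  have h := ore_aux m p hp
  have hm' : m = (m - 1) + 1 := (Nat.succ_pred_eq_of_pos hm).symm
  have hpow : (Fintype.card F) ^ m = (Fintype.card F) ^ (m - 1) * Fintype.card F := by
    conv_lhs => rw [hm']
    rw [pow_succ]
  rw [hpow, ← mul_assoc] at h
  have h2 : (Finset.univ.filter fun x : Fin m → F => eval x p = 0).card * Fintype.card F ≤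
      (d * (Fintype.card F) ^ (m - 1)) * Fintype.card F :=
    h.trans (Nat.mul_le_mul_right _ (Nat.mul_le_mul_right _ hpd))
  exact Nat.le_of_mul_le_mul_right h2 hq

lemma mono_aux {m d : ℕ} (hm : 1 ≤ m) (hdq : d < Fintype.card F) :
    ∀ r, 1 ≤ r → ∀ f : Fin r → MvPolynomial (Fin m) F,
    (∀ i, (f i).totalDegree ≤ d) → (LinearIndependent F f) →
    (Finset.univ.filter fun x : Fin m → F => ∀ i, eval x (f i) = 0).card + r ≤
      d * (Fintype.card F) ^ (m - 1) + 1 := by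
  intro r hr
  induction r, hr using Nat.le_induction with
  | base =>
    intro f hdeg hlin
    have h0 : f 0 ≠ 0 := hlin.ne_zero 0
    have hsub : (Finset.univ.filter fun x : Fin m → F => ∀ i, eval x (f i) = 0) ⊆
        (Finset.univ.filter fun x : Fin m → F => eval x (f 0) = 0) := by
      intro x hx
      simp only [Finset.mem_filter] at *
      exact ⟨hx.1, hx.2 0⟩
    have := (Finset.card_le_card hsub).trans (ore_bound hm (f 0) h0 (hdeg 0))
    omega
  | succ r hr ih =>
    intro f hdeg hlin
    -- find a point where some fᵢ does not vanish
    have hex : ∃ (a : Fin m → F) (i₀ : Fin (r + 1)), eval a (f i₀) ≠ 0 := by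
      by_contra hcon
      push_neg at hcon
      have h0 : f 0 ≠ 0 := hlin.ne_zero 0
      have hall : (Finset.univ.filter fun x : Fin m → F => eval x (f 0) = 0) = Finset.univ := by
        rw [Finset.filter_eq_self]; exact fun x _ => hcon x 0
      have hb := ore_bound hm (f 0) h0 (hdeg 0)
      rw [hall, Finset.card_univ] at hb
      have hcardfun : Fintype.card (Fin m → F) = Fintype.card F ^ m := by
        simp [Fintype.card_fun]
      rw [hcardfun] at hb
      have hpow : (Fintype.card F) ^ m = (Fintype.card F) ^ (m - 1) * Fintype.card F := by
        conv_lhs => rw [(Nat.succ_pred_eq_of_pos hm).symm]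
        rw [pow_succ]
        rfl
      rw [hpow] at hb
      have hq : 0 < (Fintype.card F) ^ (m-1) := Nat.pow_pos Fintype.card_pos
      nlinarith [hb, hq, hdq]
    obtain ⟨a, i₀, ha⟩ := hex
    -- permute so that the witness index is the last one
    set σ : Equiv.Perm (Fin (r + 1)) := Equiv.swap i₀ (Fin.last r) with hσ
    set f' : Fin (r + 1) → MvPolynomial (Fin m) F := f ∘ σ with hf'
    have hlin' : LinearIndependent F f' := hlin.comp σ σ.injective
    have hdeg' : ∀ i, (f' i).totalDegree ≤ d := fun i => hdeg _
    have hZeq : (Finset.univ.filter fun x : Fin m → F => ∀ i, eval x (f' i) = 0) =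
        (Finset.univ.filter fun x : Fin m → F => ∀ i, eval x (f i) = 0) := by
      apply Finset.filter_congr
      intro x _
      simp only [hf', Function.comp]
      exact ⟨fun h i => by simpa using h (σ.symm i), fun h i => h _⟩
    set b : F := eval a (f' (Fin.last r)) with hb
    have hbne : b ≠ 0 := by
      rw [hb, hf']
      simpa [hσ, Equiv.swap_apply_right] using ha
    -- the new family
    set g : Fin r → MvPolynomial (Fin m) F :=
      fun i => f' i.castSucc - (eval a (f' i.castSucc) / b) • f' (Fin.last r) with hg
    have hdegg : ∀ i, (g i).totalDegree ≤ d := by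
      intro i
      rw [hg]
      refine (totalDegree_sub _ _).trans (max_le (hdeg' _) ?_)
      exact (totalDegree_smul_le _ _).trans (hdeg' _)
    have hling : LinearIndependent F g := by
      rw [Fintype.linearIndependent_iff] at hlin' ⊢
      intro lam hlam
      set mu : Fin (r + 1) → F :=
        Fin.snoc lam (-∑ i, lam i * (eval a (f' i.castSucc) / b)) with hmu
      have hsum : ∑ j, mu j • f' j = 0 := by
        rw [Fin.sum_univ_castSucc]
        simp only [hmu, Fin.snoc_castSucc, Fin.snoc_last]
        rw [← hlam]
        simp only [hg, smul_sub, Finset.sum_sub_distrib, smul_smul]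
        rw [neg_smul, Finset.sum_smul]
        ring_nf
        simp [div_eq_mul_inv, mul_assoc]
        refine Finset.sum_congr rfl fun x _ => ?_
        congr 1
        ring
      have := hlin' mu hsum
      intro i
      have := this i.castSucc
      rwa [hmu, Fin.snoc_castSucc] at this
    -- zero sets
    set Zf := Finset.univ.filter fun x : Fin m → F => ∀ i, eval x (f' i) = 0 with hZf
    set Zg := Finset.univ.filter fun x : Fin m → F => ∀ i, eval x (g i) = 0 with hZg
    have hZsub : Zf ⊆ Zg := by
      intro x hx
      rw [hZf, Finset.mem_filter] at hx
      rw [hZg, Finset.mem_filter]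
      refine ⟨Finset.mem_univ _, fun i => ?_⟩
      simp [hg, hx.2 i.castSucc, hx.2 (Fin.last r)]
    have haZg : a ∈ Zg := by
      rw [hZg, Finset.mem_filter]
      refine ⟨Finset.mem_univ _, fun i => ?_⟩
      simp [hg, div_mul_cancel₀ _ hbne, ← hb]
    have haZf : a ∉ Zf := by
      rw [hZf, Finset.mem_filter]
      intro h
      exact hbne (h.2 (Fin.last r))
    have hcard : Zf.card + 1 ≤ Zg.card := by
      have : insert a Zf ⊆ Zg := Finset.insert_subset haZg hZsub
      have h2 := Finset.card_le_card this
      rwa [Finset.card_insert_of_notMem haZf] at h2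
    have hih := ih g hdegg hling
    rw [← hZg] at hih
    rw [← hZeq]
    omega


/-- Lemma 4.3: for `1 ≤ d < q` and `1 ≤ r ≤ binom(m+d,d)`, any `r`
linearly independent polynomials of degree at most `d` in `F_q[x₁,…,x_m]` have at most
`dq^(m-1) - r + 1` common zeros in `F_q^m`. -/
theorem statement_10 {Fq : Type} [Field Fq] [Fintype Fq] (q m d r : ℕ)
    (hq : q = Fintype.card Fq) (hm : 1 ≤ m) (hd1 : 1 ≤ d) (hdq : d < q)
    (hr1 : 1 ≤ r) (hrk : r ≤ Nat.choose (m + d) d)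
    (f : Fin r → MvPolynomial (Fin m) Fq)
    (hdeg : ∀ i, (f i).totalDegree ≤ d) (hlin : LinearIndependent Fq f) :
    (Nat.card {x : Fin m → Fq | ∀ i, MvPolynomial.eval x (f i) = 0} : ℤ) ≤
      (d : ℤ) * (q : ℤ) ^ (m - 1) - r + 1 := by
  classical
  subst hq
  have key := mono_aux (F := Fq) (m := m) (d := d) hm hdq r hr1 f hdeg hlin
  have hcard : Nat.card {x : Fin m → Fq | ∀ i, MvPolynomial.eval x (f i) = 0} =
      (Finset.univ.filter fun x : Fin m → Fq => ∀ i, MvPolynomial.eval x (f i) = 0).card := by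
    simp [Nat.card_coe_set_eq, Set.ncard_eq_toFinset_card', Set.toFinset_setOf, Fintype.card_subtype]
  rw [hcard]
  have key2 : ((Finset.univ.filter fun x : Fin m → Fq =>
      ∀ i, MvPolynomial.eval x (f i) = 0).card : ℤ) + r ≤
      (d : ℤ) * (Fintype.card Fq : ℤ) ^ (m - 1) + 1 := by
    exact_mod_cast key
  linarith
end

section
/- Let $C$ be a linear $[n,k]$-code over $\mathbb{F}_q$ with $k \ge 1$, let $d_1 < d_2 < \cdots < d_k$ be its generalized Hamming weights, and let $d_1^\perp, \ldots, d_{n-k}^\perp$ be those of the dual code $C^\perp$. Then $\{d_j^\perp : 1 \le j \le n-k\} = \{1, \ldots, n\} \setminus \{n + 1 - d_i : 1 \le i \le k\}$. -/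
/-- The `r`-th generalized Hamming weight of a linear code `C ⊆ Fq^ι`: the minimum
support size of an `r`-dimensional subcode. -/
noncomputable def ghw {Fq : Type} [Field Fq] {ι : Type} (C : Submodule Fq (ι → Fq))
    (r : ℕ) : ℕ :=
  sInf {w : ℕ | ∃ D : Submodule Fq (ι → Fq), D ≤ C ∧ Module.finrank Fq D = r ∧
    Nat.card {i : ι | ∃ c ∈ D, c i ≠ 0} = w}

/-- The dual code of `C` with respect to the standard bilinear form. -/
def dualCode {Fq : Type} [Field Fq] {ι : Type} [Fintype ι]
    (C : Submodule Fq (ι → Fq)) : Submodule Fq (ι → Fq) where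
  carrier := {v | ∀ c ∈ C, ∑ i, v i * c i = 0}
  zero_mem' := by intro c hc; simp
  add_mem' := by
    intro a b ha hb c hc
    simp only [Set.mem_setOf_eq, Pi.add_apply, add_mul] at *
    rw [Finset.sum_add_distrib, ha c hc, hb c hc, add_zero]
  smul_mem' := by
    intro r a ha c hc
    simp only [Set.mem_setOf_eq, Pi.smul_apply, smul_eq_mul, mul_assoc] at *
    rw [← Finset.mul_sum, ha c hc, mul_zero]


open Module Finset

namespace Wei

variable {Fq : Type} [Field Fq] {n : ℕ}

/-- standard dot-product bilinear form -/
noncomputable def B (Fq : Type) [Field Fq] (n : ℕ) : LinearMap.BilinForm Fq (Fin n → Fq) :=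
  LinearMap.mk₂ Fq (fun v w => ∑ i, v i * w i)
    (by intro a b c; simp [add_mul, Finset.sum_add_distrib])
    (by intro a b c; simp [Finset.mul_sum, mul_assoc])
    (by intro a b c; simp [mul_add, Finset.sum_add_distrib])
    (by intro a b c; simp [Finset.mul_sum]; ring_nf; simp [mul_assoc, mul_comm, mul_left_comm])

lemma B_apply (v w : Fin n → Fq) : B Fq n v w = ∑ i, v i * w i := rfl

lemma B_refl : (B Fq n).IsRefl := by
  intro v w h
  rw [B_apply] at *
  rw [← h]
  exact Finset.sum_congr rfl fun i _ => mul_comm _ _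

lemma B_nondeg : (B Fq n).Nondegenerate := by
  refine ⟨fun v h => ?_, fun v h => ?_⟩ <;>
  · funext i
    have := h (Pi.single i 1)
    rw [B_apply] at this
    simpa [Pi.single_apply, Finset.sum_ite_eq'] using this

lemma dualCode_eq (C : Submodule Fq (Fin n → Fq)) :
    dualCode C = (B Fq n).orthogonal C := by
  ext v
  constructor
  · intro hv c hc
    have := hv c hc
    show B Fq n c v = 0
    rw [B_apply, ← this]
    exact Finset.sum_congr rfl fun i _ => mul_comm _ _
  · intro hv c hc
    have := hv c hc
    rw [show (0:Fq) = B Fq n c v from (hv c hc).symm, B_apply]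
    exact Finset.sum_congr rfl fun i _ => mul_comm _ _

/-- coordinate subspace: vectors supported in `I` -/
def E (Fq : Type) [Field Fq] {n : ℕ} (I : Finset (Fin n)) : Submodule Fq (Fin n → Fq) where
  carrier := {v | ∀ i ∉ I, v i = 0}
  zero_mem' := by intro i _; rfl
  add_mem' := by intro a b ha hb i hi; simp [ha i hi, hb i hi]
  smul_mem' := by intro r a ha i hi; simp [ha i hi]

lemma mem_E {I : Finset (Fin n)} {v : Fin n → Fq} : v ∈ E Fq I ↔ ∀ i ∉ I, v i = 0 := Iff.rfl

lemma E_mono {I J : Finset (Fin n)} (h : I ⊆ J) : E Fq I ≤ E Fq J := by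
  intro v hv i hi
  exact hv i (fun hI => hi (h hI))

lemma finrank_E (I : Finset (Fin n)) : finrank Fq (E Fq I) = I.card := by
  let f : E Fq I →ₗ[Fq] (I → Fq) :=
    { toFun := fun v i => v.1 i.1
      map_add' := fun a b => rfl
      map_smul' := fun c a => rfl }
  have hbij : Function.Bijective f := by
    constructor
    · intro a b hab
      ext i
      by_cases hi : i ∈ I
      · exact congrFun hab ⟨i, hi⟩
      · rw [a.2 i hi, b.2 i hi]
    · intro w
      refine ⟨⟨fun i => if h : i ∈ I then w ⟨i, h⟩ else 0, ?_⟩, ?_⟩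
      · intro i hi; simp [hi]
      · ext i; exact dif_pos i.2
  rw [(LinearEquiv.ofBijective f hbij).finrank_eq, Module.finrank_fintype_fun_eq_card,
    Fintype.card_coe]

lemma orthogonal_E (I : Finset (Fin n)) :
    (B Fq n).orthogonal (E Fq I) = E Fq Iᶜ := by
  ext v
  simp only [LinearMap.BilinForm.mem_orthogonal_iff]
  constructor
  · intro h i hi
    simp only [Finset.mem_compl, not_not] at hi
    have hs : Pi.single i (1:Fq) ∈ E Fq I := by
      intro j hj
      exact Pi.single_eq_of_ne (fun hji => hj (by rw [hji]; exact hi)) 1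
    have h2 := h _ hs
    rw [B_apply] at h2
    simpa [Pi.single_apply] using h2
  · intro h c hc
    rw [B_apply]
    apply Finset.sum_eq_zero
    intro i _
    by_cases hi : i ∈ I
    · rw [h i (by simpa using hi), mul_zero]
    · rw [hc i hi, zero_mul]

lemma orthogonal_sup (W₁ W₂ : Submodule Fq (Fin n → Fq)) :
    (B Fq n).orthogonal (W₁ ⊔ W₂) = (B Fq n).orthogonal W₁ ⊓ (B Fq n).orthogonal W₂ := by
  apply le_antisymm
  · exact le_inf (LinearMap.BilinForm.orthogonal_le le_sup_left)
      (LinearMap.BilinForm.orthogonal_le le_sup_right)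
  · intro v hv y hy
    obtain ⟨y1, h1, y2, h2, rfl⟩ := Submodule.mem_sup.mp hy
    have e1 : ∑ i, y1 i * v i = 0 := hv.1 y1 h1
    have e2 : ∑ i, y2 i * v i = 0 := hv.2 y2 h2
    show ∑ i, (y1 + y2) i * v i = 0
    simp [add_mul, Finset.sum_add_distrib, e1, e2]

lemma finrank_ambient : finrank Fq (Fin n → Fq) = n := by
  rw [Module.finrank_fintype_fun_eq_card, Fintype.card_fin]

set_option maxHeartbeats 1000000 in
lemma orthogonal_inf (W₁ W₂ : Submodule Fq (Fin n → Fq)) :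
    (B Fq n).orthogonal (W₁ ⊓ W₂) = (B Fq n).orthogonal W₁ ⊔ (B Fq n).orthogonal W₂ := by
  have h := orthogonal_sup ((B Fq n).orthogonal W₁) ((B Fq n).orthogonal W₂)
  rw [LinearMap.BilinForm.orthogonal_orthogonal B_nondeg B_refl W₁,
      LinearMap.BilinForm.orthogonal_orthogonal B_nondeg B_refl W₂] at h
  rw [← h]
  exact LinearMap.BilinForm.orthogonal_orthogonal B_nondeg B_refl
    ((B Fq n).orthogonal W₁ ⊔ (B Fq n).orthogonal W₂)

lemma finrank_dualCode (C : Submodule Fq (Fin n → Fq)) :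
    finrank Fq (dualCode C) = n - finrank Fq C := by
  rw [dualCode_eq, LinearMap.BilinForm.finrank_orthogonal B_nondeg, finrank_ambient]

lemma finrank_le_n (C : Submodule Fq (Fin n → Fq)) : finrank Fq C ≤ n := by
  have := Submodule.finrank_le C
  rwa [finrank_ambient] at this

/-- Key identity. -/
lemma key_identity (C : Submodule Fq (Fin n → Fq)) (I : Finset (Fin n)) :
    finrank Fq (dualCode C ⊓ E Fq Iᶜ : Submodule Fq (Fin n → Fq)) + finrank Fq C + I.card
      = finrank Fq (C ⊓ E Fq I : Submodule Fq (Fin n → Fq)) + n := by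
  have h1 : (B Fq n).orthogonal (C ⊓ E Fq I) =
      (dualCode C ⊔ E Fq Iᶜ : Submodule Fq (Fin n → Fq)) := by
    rw [orthogonal_inf, ← dualCode_eq, orthogonal_E]
  have h2 := Submodule.finrank_sup_add_finrank_inf_eq (dualCode C) (E Fq Iᶜ)
  have h3 : finrank Fq ((B Fq n).orthogonal (C ⊓ E Fq I)) =
      n - finrank Fq (C ⊓ E Fq I : Submodule Fq (Fin n → Fq)) := by
    rw [LinearMap.BilinForm.finrank_orthogonal B_nondeg, finrank_ambient]
  rw [h1] at h3
  have h4 := finrank_dualCode C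
  have h5 : finrank Fq (E Fq Iᶜ) = n - I.card := by
    rw [finrank_E, Finset.card_compl, Fintype.card_fin]
  have h6 : finrank Fq (C ⊓ E Fq I : Submodule Fq (Fin n → Fq)) ≤ I.card := by
    have := Submodule.finrank_mono (inf_le_right :
      (C ⊓ E Fq I : Submodule Fq (Fin n → Fq)) ≤ E Fq I)
    rwa [finrank_E] at this
  have h7 : finrank Fq (C ⊓ E Fq I : Submodule Fq (Fin n → Fq)) ≤ finrank Fq C :=
    Submodule.finrank_mono inf_le_left
  have h8 := finrank_le_n C
  have h9 : I.card ≤ n := by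
    simpa using Finset.card_le_univ I
  omega

/-- dimension profile -/
noncomputable def fdim (C : Submodule Fq (Fin n → Fq)) (m : ℕ) : ℕ :=
  ((Finset.univ : Finset (Fin n)).powersetCard m).sup
    (fun I => finrank Fq (C ⊓ E Fq I : Submodule Fq (Fin n → Fq)))

lemma E_empty : E Fq (∅ : Finset (Fin n)) = ⊥ := by
  ext v
  simp [mem_E, Submodule.mem_bot, funext_iff]

lemma E_univ : E Fq (Finset.univ : Finset (Fin n)) = ⊤ := by
  ext v
  simp [mem_E]

lemma fdim_zero (C : Submodule Fq (Fin n → Fq)) : fdim C 0 = 0 := by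
  rw [fdim, Finset.powersetCard_zero, Finset.sup_singleton, E_empty, inf_bot_eq, finrank_bot]

lemma fdim_n (C : Submodule Fq (Fin n → Fq)) : fdim C n = finrank Fq C := by
  have h : (Finset.univ : Finset (Fin n)).powersetCard n = {Finset.univ} := by
    have h2 := Finset.powersetCard_self (Finset.univ : Finset (Fin n))
    rwa [Finset.card_univ, Fintype.card_fin] at h2
  rw [fdim, h, Finset.sup_singleton, E_univ, inf_top_eq]

lemma le_fdim (C : Submodule Fq (Fin n → Fq)) {m : ℕ} {I : Finset (Fin n)} (hI : I.card = m) :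
    finrank Fq (C ⊓ E Fq I : Submodule Fq (Fin n → Fq)) ≤ fdim C m :=
  Finset.le_sup (f := fun I => finrank Fq (C ⊓ E Fq I : Submodule Fq (Fin n → Fq)))
    (Finset.mem_powersetCard_univ.mpr hI)

lemma fdim_exists (C : Submodule Fq (Fin n → Fq)) {m : ℕ} (hm : m ≤ n) :
    ∃ I : Finset (Fin n), I.card = m ∧
      finrank Fq (C ⊓ E Fq I : Submodule Fq (Fin n → Fq)) = fdim C m := by
  have hne : ((Finset.univ : Finset (Fin n)).powersetCard m).Nonempty := by
    rw [Finset.powersetCard_nonempty, Finset.card_univ, Fintype.card_fin]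
    exact hm
  obtain ⟨I, hI, hIe⟩ := Finset.exists_mem_eq_sup _ hne
    (fun I => finrank Fq (C ⊓ E Fq I : Submodule Fq (Fin n → Fq)))
  exact ⟨I, Finset.mem_powersetCard_univ.mp hI, hIe.symm⟩

lemma fdim_mono (C : Submodule Fq (Fin n → Fq)) {m m' : ℕ} (h : m ≤ m') (h' : m' ≤ n) :
    fdim C m ≤ fdim C m' := by
  obtain ⟨I, hIc, hIr⟩ := fdim_exists C (le_trans h h')
  obtain ⟨J, hIJ, hJc⟩ := Finset.exists_superset_card_eq (hIc ▸ h)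
    (by rw [Fintype.card_fin]; exact h')
  calc fdim C m = finrank Fq (C ⊓ E Fq I : Submodule Fq (Fin n → Fq)) := hIr.symm
    _ ≤ finrank Fq (C ⊓ E Fq J : Submodule Fq (Fin n → Fq)) :=
        Submodule.finrank_mono (inf_le_inf_left C (E_mono hIJ))
    _ ≤ fdim C m' := le_fdim C hJc


lemma fdim_step (C : Submodule Fq (Fin n → Fq)) {m : ℕ} (hm : m + 1 ≤ n) :
    fdim C (m + 1) ≤ fdim C m + 1 := by
  obtain ⟨I, hIc, hIr⟩ := fdim_exists C hm
  obtain ⟨i, hi⟩ : I.Nonempty := Finset.card_pos.mp (by omega)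
  set J := I.erase i with hJdef
  have hJc : J.card = m := by rw [hJdef, Finset.card_erase_of_mem hi, hIc]; omega
  set W : Submodule Fq (Fin n → Fq) := C ⊓ E Fq I with hW
  let ψ : W →ₗ[Fq] Fq := (LinearMap.proj i).comp W.subtype
  have hker : (LinearMap.ker ψ).map W.subtype = C ⊓ E Fq J := by
    ext v
    constructor
    · rintro ⟨⟨w, hw⟩, hwk, rfl⟩
      refine ⟨hw.1, fun j hj => ?_⟩
      by_cases hji : j = i
      · subst hji; exact hwk
      · exact hw.2 j (fun hjI => hj (Finset.mem_erase.mpr ⟨hji, hjI⟩))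
    · intro hv
      have hvi : v i = 0 := hv.2 i (Finset.notMem_erase i I)
      have hvW : v ∈ W := ⟨hv.1, fun j hj => by
        by_cases hji : j = i
        · subst hji; exact hvi
        · exact hv.2 j (fun hjJ => hj (Finset.mem_of_mem_erase hjJ))⟩
      exact ⟨⟨v, hvW⟩, hvi, rfl⟩
  have h1 : finrank Fq (LinearMap.ker ψ) =
      finrank Fq (C ⊓ E Fq J : Submodule Fq (Fin n → Fq)) := by
    rw [← hker, Submodule.finrank_map_subtype_eq]
  have h2 := LinearMap.finrank_range_add_finrank_ker ψ
  have h3 : finrank Fq (LinearMap.range ψ) ≤ 1 := by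
    have h := Submodule.finrank_le (LinearMap.range ψ)
    rwa [Module.finrank_self] at h
  have h4 := le_fdim C hJc
  omega

lemma exists_subcode (W : Submodule Fq (Fin n → Fq)) {r : ℕ} (hr : r ≤ finrank Fq W) :
    ∃ D : Submodule Fq (Fin n → Fq), D ≤ W ∧ finrank Fq D = r := by
  let b := finBasis Fq W
  have h2 : LinearIndependent Fq (fun j : Fin r => b (Fin.castLE hr j)) :=
    b.linearIndependent.comp _ (Fin.castLE_injective hr)
  have hli : LinearIndependent Fq (W.subtype ∘ fun j : Fin r => b (Fin.castLE hr j)) :=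
    h2.map' W.subtype (Submodule.ker_subtype W)
  refine ⟨Submodule.span Fq (Set.range (W.subtype ∘ fun j : Fin r => b (Fin.castLE hr j))),
    ?_, ?_⟩
  · rw [Submodule.span_le]
    rintro x ⟨j, rfl⟩
    exact (b (Fin.castLE hr j)).2
  · rw [finrank_span_eq_card hli, Fintype.card_fin]

/-- the support of a submodule as a finset -/
noncomputable def suppF (D : Submodule Fq (Fin n → Fq)) : Finset (Fin n) := by
  classical exact Finset.univ.filter (fun i => ∃ c ∈ D, c i ≠ 0)

lemma mem_suppF {D : Submodule Fq (Fin n → Fq)} {i : Fin n} :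
    i ∈ suppF D ↔ ∃ c ∈ D, c i ≠ 0 := by
  simp [suppF]

lemma card_supp (D : Submodule Fq (Fin n → Fq)) :
    Nat.card {i : Fin n | ∃ c ∈ D, c i ≠ 0} = (suppF D).card := by
  classical
  rw [Nat.card_coe_set_eq, Set.ncard_eq_toFinset_card']
  congr 1
  ext i
  simp [suppF]

lemma le_E_suppF (D : Submodule Fq (Fin n → Fq)) : D ≤ E Fq (suppF D) := by
  intro v hv i hi
  rw [mem_suppF] at hi
  push_neg at hi
  exact hi v hv

lemma suppF_subset {D : Submodule Fq (Fin n → Fq)} {I : Finset (Fin n)}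
    (h : D ≤ E Fq I) : suppF D ⊆ I := by
  intro i hi
  rw [mem_suppF] at hi
  obtain ⟨c, hc, hci⟩ := hi
  by_contra hiI
  exact hci (h hc i hiI)

lemma ghw_eq_sInf (C : Submodule Fq (Fin n → Fq)) {r : ℕ} (hr : r ≤ finrank Fq C) :
    ghw C r = sInf {m | ∃ I : Finset (Fin n), I.card = m ∧
      r ≤ finrank Fq (C ⊓ E Fq I : Submodule Fq (Fin n → Fq))} := by
  set S2 : Set ℕ := {m | ∃ I : Finset (Fin n), I.card = m ∧
    r ≤ finrank Fq (C ⊓ E Fq I : Submodule Fq (Fin n → Fq))} with hS2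
  set S1 : Set ℕ := {w : ℕ | ∃ D : Submodule Fq (Fin n → Fq), D ≤ C ∧
    Module.finrank Fq D = r ∧ Nat.card {i : Fin n | ∃ c ∈ D, c i ≠ 0} = w} with hS1
  have hS2ne : S2.Nonempty := by
    refine ⟨n, Finset.univ, by rw [Finset.card_univ, Fintype.card_fin], ?_⟩
    rw [E_univ, inf_top_eq]
    exact hr
  -- from any element of S2, build a smaller-or-equal element of S1
  have hstep : ∀ m ∈ S2, ∃ w ∈ S1, w ≤ m := by
    rintro m ⟨I, hIc, hIr⟩
    obtain ⟨D, hDle, hDr⟩ := exists_subcode (C ⊓ E Fq I) hIr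
    refine ⟨(suppF D).card, ⟨D, le_trans hDle inf_le_left, hDr, card_supp D⟩, ?_⟩
    calc (suppF D).card ≤ I.card := Finset.card_le_card
          (suppF_subset (le_trans hDle inf_le_right))
      _ = m := hIc
  -- from any element of S1, build a smaller-or-equal element of S2
  have hstep' : ∀ w ∈ S1, ∃ m ∈ S2, m ≤ w := by
    rintro w ⟨D, hDle, hDr, hDc⟩
    refine ⟨(suppF D).card, ⟨suppF D, rfl, ?_⟩, ?_⟩
    · rw [← hDr]
      exact Submodule.finrank_mono (le_inf hDle (le_E_suppF D))
    · rw [← hDc, card_supp D]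
  have hS1ne : S1.Nonempty := by
    obtain ⟨m, hm⟩ := hS2ne
    obtain ⟨w, hw, _⟩ := hstep m hm
    exact ⟨w, hw⟩
  apply le_antisymm
  · obtain ⟨w, hw, hwle⟩ := hstep _ (Nat.sInf_mem hS2ne)
    exact le_trans (Nat.sInf_le hw) hwle
  · obtain ⟨m, hm, hmle⟩ := hstep' _ (Nat.sInf_mem hS1ne)
    exact le_trans (Nat.sInf_le hm) hmle

lemma mem_S_iff (C : Submodule Fq (Fin n → Fq)) {r m : ℕ} (hm : m ≤ n) :
    (∃ I : Finset (Fin n), I.card = m ∧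
      r ≤ finrank Fq (C ⊓ E Fq I : Submodule Fq (Fin n → Fq))) ↔ r ≤ fdim C m := by
  constructor
  · rintro ⟨I, hc, hr⟩
    exact le_trans hr (le_fdim C hc)
  · intro h
    obtain ⟨I, hc, he⟩ := fdim_exists C hm
    exact ⟨I, hc, he ▸ h⟩

lemma ghw_bounds (C : Submodule Fq (Fin n → Fq)) {r : ℕ} (hr1 : 1 ≤ r)
    (hr2 : r ≤ finrank Fq C) : 1 ≤ ghw C r ∧ ghw C r ≤ n := by
  rw [ghw_eq_sInf C hr2]
  set S : Set ℕ := {m | ∃ I : Finset (Fin n), I.card = m ∧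
    r ≤ finrank Fq (C ⊓ E Fq I : Submodule Fq (Fin n → Fq))} with hS
  have hSne : S.Nonempty := by
    refine ⟨n, Finset.univ, by rw [Finset.card_univ, Fintype.card_fin], ?_⟩
    rw [E_univ, inf_top_eq]
    exact hr2
  constructor
  · obtain ⟨I, hIc, hIr⟩ := Nat.sInf_mem hSne
    have h6 : finrank Fq (C ⊓ E Fq I : Submodule Fq (Fin n → Fq)) ≤ I.card := by
      have h := Submodule.finrank_mono (inf_le_right :
        (C ⊓ E Fq I : Submodule Fq (Fin n → Fq)) ≤ E Fq I)
      rwa [finrank_E] at h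
    omega
  · apply Nat.sInf_le
    refine ⟨Finset.univ, by rw [Finset.card_univ, Fintype.card_fin], ?_⟩
    rw [E_univ, inf_top_eq]
    exact hr2

lemma jump_iff (C : Submodule Fq (Fin n → Fq)) {m : ℕ} (hm1 : 1 ≤ m) (hm2 : m ≤ n) :
    (∃ r : ℕ, 1 ≤ r ∧ r ≤ finrank Fq C ∧ ghw C r = m) ↔
      fdim C m = fdim C (m - 1) + 1 := by
  have hstep : fdim C m ≤ fdim C (m - 1) + 1 := by
    have h := fdim_step C (m := m - 1) (by omega)
    rwa [Nat.sub_add_cancel hm1] at h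
  constructor
  · rintro ⟨r, hr1, hr2, hghw⟩
    rw [ghw_eq_sInf C hr2] at hghw
    set S : Set ℕ := {m | ∃ I : Finset (Fin n), I.card = m ∧
      r ≤ finrank Fq (C ⊓ E Fq I : Submodule Fq (Fin n → Fq))} with hS
    have hSne : S.Nonempty := by
      refine ⟨n, Finset.univ, by rw [Finset.card_univ, Fintype.card_fin], ?_⟩
      rw [E_univ, inf_top_eq]
      exact hr2
    have hmem : m ∈ S := by rw [← hghw]; exact Nat.sInf_mem hSne
    have h1 : r ≤ fdim C m := (mem_S_iff C hm2).mp hmem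
    have hnot : ¬ r ≤ fdim C (m - 1) := by
      intro hc
      have : m - 1 ∈ S := (mem_S_iff C (by omega)).mpr hc
      have := Nat.sInf_le this
      omega
    omega
  · intro h
    set r := fdim C m with hrdef
    have hr1 : 1 ≤ r := by omega
    have hr2 : r ≤ finrank Fq C := by
      have := fdim_mono C hm2 (le_refl n)
      rw [fdim_n] at this
      omega
    refine ⟨r, hr1, hr2, ?_⟩
    rw [ghw_eq_sInf C hr2]
    apply le_antisymm
    · exact Nat.sInf_le ((mem_S_iff C hm2).mpr (le_refl r))
    · apply le_csInf
      · refine ⟨n, Finset.univ, by rw [Finset.card_univ, Fintype.card_fin], ?_⟩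
        rw [E_univ, inf_top_eq]
        exact hr2
      · rintro m' ⟨I, hIc, hIr⟩
        by_contra hlt
        push_neg at hlt
        have hm' : m' ≤ n := by
          subst hIc
          simpa using Finset.card_le_univ I
        have h1 : r ≤ fdim C m' := le_trans hIr (le_fdim C hIc)
        have h2 : fdim C m' ≤ fdim C (m - 1) := fdim_mono C (by omega) (by omega)
        omega

lemma fdim_dual (C : Submodule Fq (Fin n → Fq)) {m : ℕ} (hm : m ≤ n) :
    fdim (dualCode C) (n - m) + finrank Fq C + m = fdim C m + n := by
  apply le_antisymm
  · obtain ⟨J, hJc, hJr⟩ := fdim_exists (dualCode C) (Nat.sub_le n m)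
    have hJc' : Jᶜ.card = m := by
      rw [Finset.card_compl, Fintype.card_fin, hJc]
      omega
    have hkey := key_identity C Jᶜ
    rw [compl_compl] at hkey
    have h1 := le_fdim C hJc'
    omega
  · obtain ⟨I, hIc, hIr⟩ := fdim_exists C hm
    have hkey := key_identity C I
    have hIcc : Iᶜ.card = n - m := by rw [Finset.card_compl, Fintype.card_fin, hIc]
    have h1 := le_fdim (dualCode C) hIcc
    omega

lemma jump_dual (C : Submodule Fq (Fin n → Fq)) {x : ℕ} (hx1 : 1 ≤ x) (hx2 : x ≤ n) :
    (fdim (dualCode C) x = fdim (dualCode C) (x - 1) + 1) ↔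
      ¬ (fdim C (n + 1 - x) = fdim C (n + 1 - x - 1) + 1) := by
  set m := n + 1 - x with hmdef
  have hm1 : 1 ≤ m := by omega
  have hm2 : m ≤ n := by omega
  have hA := fdim_dual C hm2
  have hB := fdim_dual C (m := m - 1) (by omega)
  rw [show n - m = x - 1 by omega] at hA
  rw [show n - (m - 1) = x by omega] at hB
  have s1 : fdim C m ≤ fdim C (m - 1) + 1 := by
    have h := fdim_step C (m := m - 1) (by omega)
    rwa [Nat.sub_add_cancel hm1] at h
  have s2 : fdim (dualCode C) x ≤ fdim (dualCode C) (x - 1) + 1 := by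
    have h := fdim_step (dualCode C) (m := x - 1) (by omega)
    rwa [Nat.sub_add_cancel hx1] at h
  have mono1 : fdim C (m - 1) ≤ fdim C m := fdim_mono C (by omega) hm2
  have mono2 : fdim (dualCode C) (x - 1) ≤ fdim (dualCode C) x :=
    fdim_mono (dualCode C) (by omega) hx2
  omega

end Wei


/-- Wei duality: the generalized Hamming weights of the dual code are
exactly `{1,…,n} \ {n + 1 - d_i(C) : 1 ≤ i ≤ k}`. -/
theorem statement_12 {Fq : Type} [Field Fq] [Fintype Fq] (n k : ℕ) (hk : 1 ≤ k)
    (C : Submodule Fq (Fin n → Fq)) (hdim : Module.finrank Fq C = k) :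
    {x : ℕ | ∃ j : ℕ, 1 ≤ j ∧ j ≤ n - k ∧ ghw (dualCode C) j = x} =
      {x : ℕ | 1 ≤ x ∧ x ≤ n} \
        {x : ℕ | ∃ i : ℕ, 1 ≤ i ∧ i ≤ k ∧ n + 1 - ghw C i = x} := by
  have hkn : k ≤ n := by rw [← hdim]; exact Wei.finrank_le_n C
  have hdual : Module.finrank Fq (dualCode C) = n - k := by
    rw [Wei.finrank_dualCode, hdim]
  ext x
  simp only [Set.mem_setOf_eq, Set.mem_diff]
  constructor
  · rintro ⟨j, hj1, hj2, rfl⟩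
    have hb := Wei.ghw_bounds (dualCode C) hj1
      (by omega : j ≤ Module.finrank Fq (dualCode C))
    refine ⟨⟨hb.1, hb.2⟩, ?_⟩
    have hjump' := (Wei.jump_iff (dualCode C) hb.1 hb.2).mp ⟨j, hj1, by omega, rfl⟩
    have hnj := (Wei.jump_dual C hb.1 hb.2).mp hjump'
    rintro ⟨i, hi1, hi2, hix⟩
    have hdb := Wei.ghw_bounds C hi1 (by omega : i ≤ Module.finrank Fq C)
    have hm : ghw C i = n + 1 - ghw (dualCode C) j := by omega
    exact hnj ((Wei.jump_iff C (m := n + 1 - ghw (dualCode C) j)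
      (by omega) (by omega)).mp ⟨i, hi1, by omega, hm⟩)
  · rintro ⟨⟨hx1, hx2⟩, hnot⟩
    have hnj : ¬ (Wei.fdim C (n + 1 - x) = Wei.fdim C (n + 1 - x - 1) + 1) := by
      intro hj
      obtain ⟨i, hi1, hi2, hghw⟩ := (Wei.jump_iff C (by omega) (by omega)).mpr hj
      exact hnot ⟨i, hi1, by omega, by omega⟩
    have hjump := (Wei.jump_dual C hx1 hx2).mpr hnj
    obtain ⟨j, hj1, hj2, hghw⟩ := (Wei.jump_iff (dualCode C) hx1 hx2).mpr hjump
    exact ⟨j, hj1, by omega, hghw⟩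
end

section
/- Let $C$ be a linear $[n,k]$-code over $\mathbb{F}_q$ of dimension $k \ge 1$. Then its generalized Hamming weights satisfy $1 \le d_1(C) < d_2(C) < \cdots < d_k(C) \le n$. -/
lemma ghw_le' {Fq : Type} [Field Fq] {ι : Type} (C : Submodule Fq (ι → Fq)) (r : ℕ)
    (D : Submodule Fq (ι → Fq)) (hD : D ≤ C) (hr : Module.finrank Fq D = r) :
    ghw C r ≤ Nat.card {i : ι | ∃ c ∈ D, c i ≠ 0} :=
  Nat.sInf_le ⟨D, hD, hr, rfl⟩

lemma exists_subcode {Fq : Type} [Field Fq] {ι : Type} (C : Submodule Fq (ι → Fq))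
    {k r : ℕ} (hdim : Module.finrank Fq C = k) (hr : r ≤ k) :
    ∃ D : Submodule Fq (ι → Fq), D ≤ C ∧ Module.finrank Fq D = r := by
  obtain ⟨f, hf⟩ := exists_linearIndependent_of_le_finrank (R := Fq) (M := C)
    (n := r) (by rw [hdim]; exact hr)
  refine ⟨Submodule.span Fq (Set.range (C.subtype ∘ f)), ?_, ?_⟩
  · rw [Submodule.span_le]; rintro _ ⟨j, rfl⟩; exact (f j).2
  · have hli : LinearIndependent Fq (C.subtype ∘ f) :=
      hf.map' C.subtype (Submodule.ker_subtype C)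
    rw [finrank_span_eq_card hli, Fintype.card_fin]

lemma supp_nonempty {Fq : Type} [Field Fq] {ι : Type} (D : Submodule Fq (ι → Fq))
    (hD : Module.finrank Fq D ≠ 0) : ∃ i, ∃ c ∈ D, c i ≠ 0 := by
  have hbot : D ≠ ⊥ := by
    rintro rfl; exact hD (by simp)
  obtain ⟨c, hc, hc0⟩ := Submodule.exists_mem_ne_zero_of_ne_bot hbot
  obtain ⟨i, hi⟩ := Function.ne_iff.mp hc0
  exact ⟨i, c, hc, hi⟩

/-- Wei monotonicity: for an `[n,k]` code `C` with `k ≥ 1`,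
`1 ≤ d₁(C) < d₂(C) < ⋯ < d_k(C) ≤ n`. -/
theorem statement_13 {Fq : Type} [Field Fq] [Fintype Fq] (n k : ℕ) (hk : 1 ≤ k)
    (C : Submodule Fq (Fin n → Fq)) (hdim : Module.finrank Fq C = k) :
    1 ≤ ghw C 1 ∧ (∀ r : ℕ, 1 ≤ r → r < k → ghw C r < ghw C (r + 1)) ∧
      ghw C k ≤ n := by
  -- generic: the defining set is nonempty for r ≤ k, and sInf is attained
  have hmem : ∀ r : ℕ, r ≤ k → ∃ D : Submodule Fq (Fin n → Fq), D ≤ C ∧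
      Module.finrank Fq D = r ∧ Nat.card {i : Fin n | ∃ c ∈ D, c i ≠ 0} = ghw C r := by
    intro r hr
    obtain ⟨D, hD, hDr⟩ := exists_subcode C hdim hr
    have hne : {w : ℕ | ∃ D : Submodule Fq (Fin n → Fq), D ≤ C ∧ Module.finrank Fq D = r ∧
        Nat.card {i : Fin n | ∃ c ∈ D, c i ≠ 0} = w}.Nonempty := ⟨_, D, hD, hDr, rfl⟩
    exact Nat.sInf_mem hne
  refine ⟨?_, ?_, ?_⟩
  · -- 1 ≤ ghw C 1
    obtain ⟨D, hD, hDr, hw⟩ := hmem 1 hk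
    obtain ⟨i, hi⟩ := supp_nonempty D (by rw [hDr]; exact one_ne_zero)
    rw [← hw]
    have : ({i : Fin n | ∃ c ∈ D, c i ≠ 0} : Set (Fin n)).Nonempty := ⟨i, hi⟩
    have hfin : ({i : Fin n | ∃ c ∈ D, c i ≠ 0} : Set (Fin n)).Finite := Set.toFinite _
    have := this.to_subtype
    have := hfin.to_subtype
    exact Nat.card_pos
  · -- strict monotonicity
    intro r hr1 hrk
    obtain ⟨D, hD, hDr, hw⟩ := hmem (r + 1) hrk
    obtain ⟨i, hi⟩ := supp_nonempty D (by rw [hDr]; exact r.succ_ne_zero)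
    set φ : D →ₗ[Fq] Fq := (LinearMap.proj i).comp D.subtype with hφ
    have hφsurj : Function.Surjective φ := by
      obtain ⟨c, hc, hci⟩ := hi
      intro x
      refine ⟨(x * (c i)⁻¹) • ⟨c, hc⟩, ?_⟩
      have h1 : φ ⟨c, hc⟩ = c i := rfl
      rw [map_smul, h1, smul_eq_mul, mul_assoc, inv_mul_cancel₀ hci, mul_one]
    have hker : Module.finrank Fq (LinearMap.ker φ) = r := by
      have h2 : Module.finrank Fq (LinearMap.range φ) = 1 := by
        rw [LinearMap.range_eq_top.mpr hφsurj]
        rw [finrank_top Fq Fq, Module.finrank_self]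
      have h1 := LinearMap.finrank_range_add_finrank_ker φ
      rw [hDr, h2] at h1
      rw [Nat.add_comm] at h1
      exact Nat.succ_injective h1
    set D' : Submodule Fq (Fin n → Fq) := (LinearMap.ker φ).map D.subtype with hD'
    have hD'le : D' ≤ C := le_trans (Submodule.map_subtype_le D _) hD
    have hD'r : Module.finrank Fq D' = r := by
      rw [hD', Submodule.finrank_map_subtype_eq, hker]
    have hsubset : {j : Fin n | ∃ c ∈ D', c j ≠ 0} ⊆ {j : Fin n | ∃ c ∈ D, c j ≠ 0} := by
      rintro j ⟨c, hc, hcj⟩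
      obtain ⟨x, hx, rfl⟩ := hc
      exact ⟨x, x.2, hcj⟩
    have hinot : i ∉ {j : Fin n | ∃ c ∈ D', c j ≠ 0} := by
      rintro ⟨c, hc, hci⟩
      obtain ⟨x, hx, rfl⟩ := hc
      exact hci (LinearMap.mem_ker.mp hx)
    have hss : {j : Fin n | ∃ c ∈ D', c j ≠ 0} ⊂ {j : Fin n | ∃ c ∈ D, c j ≠ 0} :=
      ⟨hsubset, fun h => hinot (h hi)⟩
    calc ghw C r ≤ Nat.card {j : Fin n | ∃ c ∈ D', c j ≠ 0} := ghw_le' C r D' hD'le hD'r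
      _ < Nat.card {j : Fin n | ∃ c ∈ D, c j ≠ 0} := by
          rw [Nat.card_coe_set_eq, Nat.card_coe_set_eq]
          exact Set.ncard_lt_ncard hss (Set.toFinite _)
      _ = ghw C (r + 1) := hw
  · -- ghw C k ≤ n
    calc ghw C k ≤ Nat.card {i : Fin n | ∃ c ∈ C, c i ≠ 0} := ghw_le' C k C le_rfl hdim
      _ ≤ Nat.card (Fin n) := Nat.card_le_card_of_injective _ Subtype.val_injective
      _ = n := by simp
end

section
/- Let $q$ be a prime power, $m \ge 1$, and $1 \le d < q - 1$. Then the minimum distance of the dual code of the projective Reed-Muller code $PRM_q(d, m)$ is exactly $d + 2$. -/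
/-- The minimum distance (minimum weight of a nonzero codeword) of a linear code. -/
noncomputable def minDist {Fq : Type} [Field Fq] {ι : Type}
    (C : Submodule Fq (ι → Fq)) : ℕ :=
  sInf {w : ℕ | ∃ v ∈ C, v ≠ (0 : ι → Fq) ∧ Nat.card {i : ι | v i ≠ 0} = w}

/-- The projective Reed–Muller code of order `d`: evaluations of homogeneous degree-`d`
polynomials at the chosen representatives `ρ P` of the points of `ℙ^m(F_q)`. -/
noncomputable def PRM {Fq : Type} [Field Fq] (m d : ℕ)
    (ρ : Projectivization Fq (Fin (m+1) → Fq) → (Fin (m+1) → Fq)) :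
    Submodule Fq (Projectivization Fq (Fin (m+1) → Fq) → Fq) :=
  Submodule.map (LinearMap.pi fun P => (MvPolynomial.aeval (ρ P)).toLinearMap)
    (MvPolynomial.homogeneousSubmodule (Fin (m+1)) Fq d)

open Polynomial Finset

lemma aux_leadingCoeff_basis {F : Type*} [Field F] [DecidableEq F] (A : Finset F) (a : F) :
    (Lagrange.basis A id a).leadingCoeff = ∏ b ∈ A.erase a, (a - b)⁻¹ := by
  classical
  rw [show Lagrange.basis A id a = ∏ b ∈ A.erase a, Lagrange.basisDivisor (id a) (id b) from rfl,
    leadingCoeff_prod]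
  refine Finset.prod_congr rfl fun b _ => ?_
  rw [Lagrange.basisDivisor, leadingCoeff_mul, leadingCoeff_C, leadingCoeff_X_sub_C, mul_one,
    id_eq, id_eq]

lemma aux_lagrange {F : Type*} [Field F] [DecidableEq F] (A : Finset F) (f : F[X])
    (hf : f.natDegree + 1 < A.card) :
    ∑ a ∈ A, (∏ b ∈ A.erase a, (a - b)⁻¹) * f.eval a = 0 := by
  classical
  have hinj : Set.InjOn id (A : Set F) := Function.injective_id.injOn
  have hdeg : f.degree < A.card :=
    lt_of_le_of_lt degree_le_natDegree (by exact_mod_cast Nat.lt_of_succ_lt hf)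
  have h0 : f.coeff (A.card - 1) = 0 := coeff_eq_zero_of_natDegree_lt (by omega)
  rw [Lagrange.eq_interpolate hinj hdeg, Lagrange.interpolate_apply,
    Polynomial.finset_sum_coeff] at h0
  rw [← h0]
  refine Finset.sum_congr rfl fun a ha => ?_
  rw [coeff_C_mul, ← Lagrange.natDegree_basis hinj ha, Polynomial.coeff_natDegree,
    aux_leadingCoeff_basis A a, id_eq]
  exact mul_comm _ _

lemma aux_hom_degsum {F : Type*} [CommRing F] {σ : Type*} {P : MvPolynomial σ F} {n : ℕ}
    (hP : P.IsHomogeneous n) {d : σ →₀ ℕ} (hd : d ∈ P.support) :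
    ∑ i ∈ d.support, d i = n := by
  have h1 := hP (MvPolynomial.mem_support_iff.mp hd)
  rw [← h1, Finsupp.weight_apply, Finsupp.sum]
  simp

lemma aux_eval_smul {F : Type*} [CommRing F] {σ : Type*} {P : MvPolynomial σ F} {n : ℕ}
    (hP : P.IsHomogeneous n) (c : F) (x : σ → F) :
    MvPolynomial.eval (c • x) P = c ^ n * MvPolynomial.eval x P := by
  rw [MvPolynomial.eval_eq, MvPolynomial.eval_eq, Finset.mul_sum]
  refine Finset.sum_congr rfl fun d hd => ?_
  rw [← aux_hom_degsum hP hd, ← Finset.prod_pow_eq_pow_sum, mul_left_comm,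
    ← Finset.prod_mul_distrib]
  congr 1
  refine Finset.prod_congr rfl fun i _ => ?_
  simp [mul_pow]

lemma aux_natDegree_aeval {F : Type*} [CommRing F] {σ : Type*} {P : MvPolynomial σ F} {n : ℕ}
    (hP : P.IsHomogeneous n) (g : σ → F[X]) (hg : ∀ i, (g i).natDegree ≤ 1) :
    (MvPolynomial.aeval g P).natDegree ≤ n := by
  rw [MvPolynomial.aeval_def, MvPolynomial.eval₂_eq]
  refine Polynomial.natDegree_sum_le_of_forall_le _ _ fun d hd => ?_
  refine natDegree_mul_le.trans ?_
  have h1 : ((algebraMap F F[X]) (MvPolynomial.coeff d P)).natDegree = 0 := natDegree_C _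
  rw [h1, zero_add]
  refine (Polynomial.natDegree_prod_le _ _).trans ?_
  calc ∑ i ∈ d.support, ((g i) ^ d i).natDegree
      ≤ ∑ i ∈ d.support, d i * 1 := Finset.sum_le_sum fun i _ =>
        natDegree_pow_le.trans (Nat.mul_le_mul le_rfl (hg i))
    _ = n := by simpa using aux_hom_degsum hP hd

noncomputable def linPoly {F : Type} [CommSemiring F] {σ : Type} [Fintype σ] [DecidableEq σ]
    (f : Module.Dual F (σ → F)) : MvPolynomial σ F :=
  ∑ i, MvPolynomial.C (f fun j => if i = j then 1 else 0) * MvPolynomial.X i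

lemma linPoly_isHomogeneous {F : Type} [CommSemiring F] {σ : Type} [Fintype σ] [DecidableEq σ]
    (f : Module.Dual F (σ → F)) : (linPoly f).IsHomogeneous 1 :=
  MvPolynomial.IsHomogeneous.sum _ _ _ fun i _ =>
    (MvPolynomial.isHomogeneous_X F i).C_mul _

lemma eval_linPoly {F : Type} [CommSemiring F] {σ : Type} [Fintype σ] [DecidableEq σ]
    (f : Module.Dual F (σ → F)) (x : σ → F) :
    MvPolynomial.eval x (linPoly f) = f x := by
  rw [linPoly, map_sum]
  conv_rhs => rw [pi_eq_sum_univ x, map_sum]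
  refine Finset.sum_congr rfl fun i _ => ?_
  rw [map_smul, smul_eq_mul, map_mul, MvPolynomial.eval_C, MvPolynomial.eval_X, mul_comm]

lemma aeval_self_eq_eval {F : Type} [CommSemiring F] {σ : Type} (x : σ → F)
    (P : MvPolynomial σ F) : MvPolynomial.aeval x P = MvPolynomial.eval x P := by
  rw [MvPolynomial.aeval_def, Algebra.algebraMap_self]
  rfl

/-- for `1 ≤ d < q - 1`, the minimum distance of the dual of the
projective Reed–Muller code `PRM_q(d,m)` is exactly `d + 2`. -/
theorem statement_14 {Fq : Type} [Field Fq] [Fintype Fq] (q m d : ℕ)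
    [Fintype (Projectivization Fq (Fin (m+1) → Fq))]
    (hq : q = Fintype.card Fq) (hm : 1 ≤ m) (hd1 : 1 ≤ d) (hdq : d < q - 1)
    (ρ : Projectivization Fq (Fin (m+1) → Fq) → (Fin (m+1) → Fq))
    (hρ : ∀ P : Projectivization Fq (Fin (m+1) → Fq),
      ∃ h : ρ P ≠ 0, Projectivization.mk Fq (ρ P) h = P) :
    minDist (dualCode (PRM m d ρ)) = d + 2 := by
  classical
  set W : Set ℕ :=
    {w : ℕ | ∃ v ∈ dualCode (PRM m d ρ), v ≠ (0 : Projectivization Fq (Fin (m+1) → Fq) → Fq) ∧ Nat.card {i : Projectivization Fq (Fin (m+1) → Fq) | v i ≠ 0} = w}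
    with hW_def
  have hq0 : 0 < q := hq ▸ Fintype.card_pos
  have hcardFq : d + 2 ≤ Fintype.card Fq := by omega
  -- membership characterization of the dual code
  have hmemchar : ∀ v : Projectivization Fq (Fin (m+1) → Fq) → Fq, v ∈ dualCode (PRM m d ρ) ↔
      ∀ F : MvPolynomial (Fin (m+1)) Fq, F.IsHomogeneous d →
        ∑ Q : Projectivization Fq (Fin (m+1) → Fq), v Q * MvPolynomial.eval (ρ Q) F = 0 := by
    intro v
    constructor
    · intro hv F hF
      have := hv _ (Submodule.mem_map_of_mem
        ((MvPolynomial.mem_homogeneousSubmodule _ _).mpr hF))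
      simpa only [LinearMap.pi_apply, AlgHom.toLinearMap_apply, aeval_self_eq_eval] using this
    · intro hv c hc
      obtain ⟨F, hF, rfl⟩ := Submodule.mem_map.mp hc
      rw [MvPolynomial.mem_homogeneousSubmodule] at hF
      simpa only [LinearMap.pi_apply, AlgHom.toLinearMap_apply, aeval_self_eq_eval]
        using hv F hF
  -- UPPER BOUND: d + 2 ∈ W
  have hmem : d + 2 ∈ W := by
    obtain ⟨A, -, hA_card⟩ := Finset.exists_subset_card_eq
      (s := (Finset.univ : Finset Fq)) (n := d + 2) (by simpa using hcardFq)
    have h01 : (1 : Fin (m+1)) ≠ 0 := by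
      simp [Fin.ext_iff, Fin.val_one', Nat.mod_eq_of_lt (by omega : 1 < m + 1)]
    set e : Fq → (Fin (m+1) → Fq) :=
      fun a j => if j = 0 then 1 else if j = 1 then a else 0 with he_def
    have he : ∀ a, e a ≠ 0 := by
      intro a h
      have := congrFun h 0
      simp [he_def] at this
    set Pt : Fq → Projectivization Fq (Fin (m+1) → Fq) := fun a => Projectivization.mk Fq (e a) (he a) with hPt_def
    have hPinj : Function.Injective Pt := by
      intro a b hab
      rw [hPt_def] at hab
      rw [Projectivization.mk_eq_mk_iff] at hab
      obtain ⟨u, hu⟩ := hab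
      have h0 := congrFun hu 0
      have h1 := congrFun hu 1
      simp [he_def, Units.smul_def, h01] at h0 h1
      rw [h0] at h1
      simpa using h1.symm
    have hc : ∀ a : Fq, ∃ u : Fqˣ, u • e a = ρ (Pt a) := by
      intro a
      obtain ⟨hne, hmk⟩ := hρ (Pt a)
      have hmk2 : Projectivization.mk Fq (ρ (Pt a)) hne = Projectivization.mk Fq (e a) (he a) :=
        hmk
      rw [Projectivization.mk_eq_mk_iff] at hmk2
      exact hmk2
    choose c hc using hc
    set wc : Fq → Fq := fun a => ((c a : Fq) ^ d)⁻¹ * ∏ b ∈ A.erase a, (a - b)⁻¹ with hwc_def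
    have hwc : ∀ a ∈ A, wc a ≠ 0 := by
      intro a ha
      apply mul_ne_zero
      · exact inv_ne_zero (pow_ne_zero _ (Units.ne_zero _))
      · rw [Finset.prod_ne_zero_iff]
        intro b hb
        exact inv_ne_zero (sub_ne_zero_of_ne (Ne.symm (Finset.ne_of_mem_erase hb)))
    set v : Projectivization Fq (Fin (m+1) → Fq) → Fq := fun Q => ∑ a ∈ A, if Q = Pt a then wc a else 0 with hv_def
    have hv_at : ∀ a ∈ A, v (Pt a) = wc a := by
      intro a ha
      rw [hv_def]
      dsimp only
      rw [Finset.sum_eq_single a (fun b hb hba => if_neg fun h => hba (hPinj h.symm))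
        (fun h => absurd ha h)]
      simp
    have hv_not : ∀ Q : Projectivization Fq (Fin (m+1) → Fq), (∀ a ∈ A, Q ≠ Pt a) → v Q = 0 := by
      intro Q h
      rw [hv_def]
      exact Finset.sum_eq_zero fun a ha => if_neg (h a ha)
    refine ⟨v, ?_, ?_, ?_⟩
    · -- v is in the dual code
      rw [hmemchar]
      intro F hF
      set g : Fin (m+1) → Polynomial Fq :=
        fun j => if j = 0 then 1 else if j = 1 then Polynomial.X else 0 with hg_def
      set fpoly := MvPolynomial.aeval g F with hf_def
      have heval : ∀ a : Fq, MvPolynomial.eval (e a) F = fpoly.eval a := by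
        intro a
        have h2 : Polynomial.aeval a (MvPolynomial.aeval g F) =
            MvPolynomial.aeval (fun i => Polynomial.aeval a (g i)) F := by
          rw [← MvPolynomial.comp_aeval]
          rfl
        have h3 : (fun i => Polynomial.aeval a (g i)) = e a := by
          funext i
          rw [hg_def, he_def]
          dsimp only
          split_ifs <;> simp
        rw [← aeval_self_eq_eval, ← h3, ← h2, hf_def, Polynomial.aeval_def]
        rw [Algebra.algebraMap_self]
        rfl
      have hfd : fpoly.natDegree ≤ d := by
        refine aux_natDegree_aeval hF g fun i => ?_
        rw [hg_def]
        dsimp only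
        split_ifs <;> simp
      calc ∑ Q : Projectivization Fq (Fin (m+1) → Fq), v Q * MvPolynomial.eval (ρ Q) F
          = ∑ Q : Projectivization Fq (Fin (m+1) → Fq), ∑ a ∈ A,
              (if Q = Pt a then wc a * MvPolynomial.eval (ρ Q) F else 0) := by
            refine Finset.sum_congr rfl fun Q _ => ?_
            rw [hv_def]
            dsimp only
            rw [Finset.sum_mul]
            exact Finset.sum_congr rfl fun a _ => by rw [ite_mul, zero_mul]
        _ = ∑ a ∈ A, ∑ Q : Projectivization Fq (Fin (m+1) → Fq),
              (if Q = Pt a then wc a * MvPolynomial.eval (ρ Q) F else 0) := Finset.sum_comm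
        _ = ∑ a ∈ A, wc a * MvPolynomial.eval (ρ (Pt a)) F := by
            refine Finset.sum_congr rfl fun a _ => ?_
            rw [Finset.sum_ite_eq' Finset.univ (Pt a)
              (fun Q => wc a * MvPolynomial.eval (ρ Q) F)]
            simp
        _ = ∑ a ∈ A, (∏ b ∈ A.erase a, (a - b)⁻¹) * fpoly.eval a := by
            refine Finset.sum_congr rfl fun a ha => ?_
            rw [← hc a, Units.smul_def, aux_eval_smul hF, hwc_def]
            dsimp only
            have hx : ((c a : Fq) ^ d) ≠ 0 := pow_ne_zero _ (Units.ne_zero _)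
            rw [heval a]
            field_simp
        _ = 0 := aux_lagrange A fpoly (by omega)
    · -- v ≠ 0
      intro h0
      have hA_ne : A.Nonempty := Finset.card_pos.mp (by omega)
      obtain ⟨a, ha⟩ := hA_ne
      have := hv_at a ha
      rw [h0] at this
      exact hwc a ha this.symm
    · -- support has cardinality d + 2
      have hsupp : {Q : Projectivization Fq (Fin (m+1) → Fq) | v Q ≠ 0} = ↑(A.image Pt) := by
        ext Q
        simp only [Set.mem_setOf_eq, Finset.coe_image, Set.mem_image, Finset.mem_coe]
        constructor
        · intro h
          by_contra hno
          push_neg at hno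
          exact h (hv_not Q fun a ha hQ => hno a ha hQ.symm)
        · rintro ⟨a, ha, rfl⟩
          rw [hv_at a ha]
          exact hwc a ha
      rw [hsupp, Nat.card_coe_set_eq, Set.ncard_coe_finset,
        Finset.card_image_of_injective _ hPinj, hA_card]
  -- LOWER BOUND: every element of W is ≥ d + 2
  have hlb : ∀ w ∈ W, d + 2 ≤ w := by
    intro wv hwv
    obtain ⟨v, hvmem, hvne, hcard⟩ := hwv
    by_contra hlt
    push_neg at hlt
    set S : Finset (Projectivization Fq (Fin (m+1) → Fq)) := Finset.univ.filter (fun Q => v Q ≠ 0) with hS_def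
    have hScard : S.card = wv := by
      rw [← hcard]
      have hset : {i : Projectivization Fq (Fin (m+1) → Fq) | v i ≠ 0} = ↑S := by
        ext Q
        simp [hS_def]
      rw [hset, Nat.card_coe_set_eq, Set.ncard_coe_finset]
    obtain ⟨P0, hP0⟩ := Function.ne_iff.mp hvne
    have hP0' : v P0 ≠ 0 := by simpa using hP0
    have hP0S : P0 ∈ S := by simp [hS_def, hP0']
    have hS1 : 1 ≤ S.card := Finset.card_pos.mpr ⟨P0, hP0S⟩
    have hSd : S.card ≤ d + 1 := by omega
    obtain ⟨hρP0ne, hmkP0⟩ := hρ P0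
    obtain ⟨i0, hi0⟩ := Function.ne_iff.mp hρP0ne
    have hi0' : ρ P0 i0 ≠ 0 := by simpa using hi0
    have hex : ∀ Q : Projectivization Fq (Fin (m+1) → Fq), ∃ f : Module.Dual Fq (Fin (m+1) → Fq),
        f (ρ P0) ≠ 0 ∧ (Q ≠ P0 → f (ρ Q) = 0) := by
      intro Q
      by_cases hQ : Q = P0
      · exact ⟨LinearMap.proj i0, by simpa using hi0', fun h => absurd hQ h⟩
      · obtain ⟨hρQne, hmkQ⟩ := hρ Q
        have hnm : ρ P0 ∉ Submodule.span Fq {ρ Q} := by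
          intro hmemQ
          rw [Submodule.mem_span_singleton] at hmemQ
          obtain ⟨cc, hcc⟩ := hmemQ
          have : Projectivization.mk Fq (ρ P0) hρP0ne = Projectivization.mk Fq (ρ Q) hρQne := by
            rw [Projectivization.mk_eq_mk_iff']
            exact ⟨cc, hcc⟩
          rw [hmkP0, hmkQ] at this
          exact hQ this.symm
        obtain ⟨f, hf1, hf2⟩ := Submodule.exists_dual_map_eq_bot_of_notMem hnm inferInstance
        refine ⟨f, hf1, fun _ => ?_⟩
        have hmem2 : f (ρ Q) ∈ Submodule.map f (Submodule.span Fq {ρ Q}) :=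
          Submodule.mem_map_of_mem (Submodule.mem_span_singleton_self _)
        rw [hf2] at hmem2
        exact (Submodule.mem_bot Fq).mp hmem2
    choose f hf1 hf2 using hex
    set Fpoly : MvPolynomial (Fin (m+1)) Fq :=
      (∏ Q ∈ S.erase P0, linPoly (f Q)) * (MvPolynomial.X i0) ^ (d + 1 - S.card) with hF_def
    have hFhom : Fpoly.IsHomogeneous d := by
      have h1 : (∏ Q ∈ S.erase P0, linPoly (f Q)).IsHomogeneous (S.card - 1) := by
        have := MvPolynomial.IsHomogeneous.prod (S.erase P0) _ (fun _ => 1)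
          (fun Q _ => linPoly_isHomogeneous (f Q))
        simpa [Finset.card_erase_of_mem hP0S] using this
      have h2 := MvPolynomial.isHomogeneous_X_pow (R := Fq) i0 (d + 1 - S.card)
      have h3 := h1.mul h2
      have h4 : S.card - 1 + (d + 1 - S.card) = d := by omega
      rwa [h4] at h3
    have hFQ : ∀ Q ∈ S, Q ≠ P0 → MvPolynomial.eval (ρ Q) Fpoly = 0 := by
      intro Q hQ hQP
      rw [hF_def, map_mul, map_prod]
      have hz : MvPolynomial.eval (ρ Q) (linPoly (f Q)) = 0 := by
        rw [eval_linPoly]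
        exact hf2 Q hQP
      rw [Finset.prod_eq_zero (Finset.mem_erase.mpr ⟨hQP, hQ⟩) hz, zero_mul]
    have hFP0 : MvPolynomial.eval (ρ P0) Fpoly ≠ 0 := by
      rw [hF_def, map_mul, map_prod]
      apply mul_ne_zero
      · rw [Finset.prod_ne_zero_iff]
        intro Q _
        rw [eval_linPoly]
        exact hf1 Q
      · rw [map_pow, MvPolynomial.eval_X]
        exact pow_ne_zero _ hi0'
    have hdual := (hmemchar v).mp hvmem Fpoly hFhom
    have hsum : ∑ Q : Projectivization Fq (Fin (m+1) → Fq), v Q * MvPolynomial.eval (ρ Q) Fpoly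
        = ∑ Q ∈ S, v Q * MvPolynomial.eval (ρ Q) Fpoly := by
      symm
      refine Finset.sum_subset (Finset.subset_univ S) fun Q _ hQ => ?_
      have : v Q = 0 := by
        by_contra h
        exact hQ (by simp [hS_def, h])
      rw [this, zero_mul]
    rw [hsum, Finset.sum_eq_single P0
      (fun Q hQ hQP => by rw [hFQ Q hQ hQP, mul_zero])
      (fun h => absurd hP0S h)] at hdual
    exact mul_ne_zero hP0' hFP0 hdual
  -- conclude
  rw [minDist]
  exact le_antisymm (Nat.sInf_le hmem) (le_csInf ⟨_, hmem⟩ hlb)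
end

section
/- Let $q$ be a prime power, $d \ge 1$, $m \ge 1$, and $k = \binom{m+d}{d}$. Order the $(m+1)$-tuples $(\alpha_1, \ldots, \alpha_{m+1})$ of nonnegative integers with $\alpha_1 + \cdots + \alpha_{m+1} = d$ in descending lexicographic order. Then for $s = 0, 1, \ldots, d$, the $(k-s)$-th tuple in this order is $(0, 0, \ldots, 0, s, d - s)$, and consequently the Tsfasman-Boguslavsky quantity $T_{k-s}(d,m) = p_{m-2j} + \sum_{i=j}^m \nu_i(p_{m-i} - p_{m-i-j})$ (with $(\nu_1,\ldots,\nu_{m+1})$ the $(k-s)$-th tuple and $j = \min\{i : \nu_i \ne 0\}$) equals $s$. -/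
/-- `pInt q k` is `q^k + q^(k-1) + ⋯ + q + 1` for `k ≥ 0`, and `0` for `k < 0`. -/
def pInt (q : ℕ) (k : ℤ) : ℕ :=
  if k < 0 then 0 else ∑ i ∈ Finset.range (k.toNat + 1), q ^ i

/-- `lexGt α β` : `α` is strictly greater than `β` in lexicographic order. -/
def lexGt {n : ℕ} (α β : Fin n → ℕ) : Prop :=
  ∃ i : Fin n, (∀ j : Fin n, j < i → α j = β j) ∧ β i < α i

/-- The tuple `(0,…,0,t,d-t)` on `Fin (m+1)`. -/
def tuple (m d t : ℕ) : Fin (m + 1) → ℕ :=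
  fun i => if i.1 = m - 1 then t else if i.1 = m then d - t else 0

lemma sum_two (m : ℕ) (hm : 1 ≤ m) (α : Fin (m + 1) → ℕ)
    (hz : ∀ i : Fin (m + 1), i.1 ≠ m - 1 → i.1 ≠ m → α i = 0) :
    ∑ i, α i = α ⟨m - 1, by omega⟩ + α ⟨m, by omega⟩ := by
  have key : ∀ i : Fin (m + 1), α i =
      (if i = (⟨m - 1, by omega⟩ : Fin (m + 1)) then α ⟨m - 1, by omega⟩ else 0) +
      (if i = (⟨m, by omega⟩ : Fin (m + 1)) then α ⟨m, by omega⟩ else 0) := by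
    intro i
    by_cases h1 : i = (⟨m - 1, by omega⟩ : Fin (m + 1))
    · subst h1
      have : ((⟨m - 1, by omega⟩ : Fin (m + 1)) : Fin (m+1)) ≠ ⟨m, by omega⟩ := by
        simp [Fin.ext_iff]; omega
      simp [this]
    · by_cases h2 : i = (⟨m, by omega⟩ : Fin (m + 1))
      · subst h2; simp [h1]
      · have := hz i (by simpa [Fin.ext_iff] using h1) (by simpa [Fin.ext_iff] using h2)
        simp [h1, h2, this]
  rw [Finset.sum_congr rfl (fun i _ => key i), Finset.sum_add_distrib,
    Finset.sum_ite_eq' Finset.univ, Finset.sum_ite_eq' Finset.univ]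
  simp

lemma tuple_sum (m d t : ℕ) (hm : 1 ≤ m) (ht : t ≤ d) : ∑ i, tuple m d t i = d := by
  rw [sum_two m hm _ (fun i h1 h2 => by simp [tuple, h1, h2])]
  simp only [tuple]
  have h1 : ¬ (m = m - 1) := by omega
  simp [h1]
  omega

lemma tuple_not_lexGt (m d s t : ℕ) (hm : 1 ≤ m) (ht : t ≤ s) :
    ¬ lexGt (tuple m d t) (tuple m d s) := by
  rintro ⟨i, hpre, hlt⟩
  have hi : i.1 ≤ m := by omega
  by_cases h1 : i.1 = m - 1
  · simp only [tuple, h1, if_pos] at hlt; omega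
  · by_cases h2 : i.1 = m
    · have hlt1 : (⟨m - 1, by omega⟩ : Fin (m + 1)) < i := by
        simp [Fin.lt_def, h2]; omega
      have h4 : t = s := by simpa [tuple] using hpre ⟨m - 1, by omega⟩ hlt1
      have h3 : ¬ (m = m - 1) := by omega
      simp [tuple, h2, h3] at hlt
      omega
    · simp [tuple, h1, h2] at hlt

lemma not_lexGt_exists (m d s : ℕ) (hm : 1 ≤ m) (hs : s ≤ d) (α : Fin (m + 1) → ℕ)
    (hsum : ∑ i, α i = d) (h : ¬ lexGt α (tuple m d s)) :
    ∃ t ≤ s, α = tuple m d t := by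
  have hz : ∀ n : ℕ, ∀ hn : n < m - 1, α ⟨n, by omega⟩ = 0 := by
    intro n
    induction n using Nat.strong_induction_on with
    | _ n ih =>
      intro hn
      by_contra hne
      apply h
      refine ⟨⟨n, by omega⟩, fun j hj => ?_, ?_⟩
      · have hj' : j.1 < n := hj
        have := ih j.1 hj' (by omega)
        have hj0 : α j = 0 := by rwa [Fin.eta] at this
        have h1 : j.1 ≠ m - 1 := by omega
        have h2 : j.1 ≠ m := by omega
        simp [tuple, h1, h2, hj0]
      · have h1 : n ≠ m := by omega
        have h2 : n ≠ m - 1 := by omega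
        simp [tuple, h1, h2]
        omega
  have hz' : ∀ j : Fin (m + 1), j.1 < m - 1 → α j = 0 := by
    intro j hj
    have := hz j.1 hj
    rwa [Fin.eta] at this
  have hts : α ⟨m - 1, by omega⟩ ≤ s := by
    by_contra hts
    apply h
    refine ⟨⟨m - 1, by omega⟩, fun j hj => ?_, ?_⟩
    · have hj' : j.1 < m - 1 := hj
      have h1 : j.1 ≠ m - 1 := by omega
      have h2 : j.1 ≠ m := by omega
      simp [tuple, h1, h2, hz' j hj']
    · have he : tuple m d s ⟨m - 1, by omega⟩ = s := by simp [tuple]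
      rw [he]
      omega
  refine ⟨α ⟨m - 1, by omega⟩, hts, ?_⟩
  have hsum2 : α ⟨m - 1, by omega⟩ + α ⟨m, by omega⟩ = d := by
    rw [← sum_two m hm α (fun i h1 h2 => hz' i (by omega)), hsum]
  funext i
  by_cases h1 : i.1 = m - 1
  · have : i = (⟨m - 1, by omega⟩ : Fin (m + 1)) := by simp [Fin.ext_iff, h1]
    rw [this]
    simp [tuple]
  · by_cases h2 : i.1 = m
    · have : i = (⟨m, by omega⟩ : Fin (m + 1)) := by simp [Fin.ext_iff, h2]
      rw [this]
      have h3 : ¬ (m = m - 1) := by omega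
      simp [tuple, h3]
      omega
    · have : i.1 < m - 1 := by omega
      simp [tuple, h1, h2, hz' i this]

lemma tuple_inj (m d : ℕ) (hm : 1 ≤ m) : Function.Injective (tuple m d) := by
  intro t t' h
  have := congrFun h ⟨m - 1, by omega⟩
  simpa [tuple] using this

lemma pInt_neg (q : ℕ) {k : ℤ} (h : k < 0) : pInt q k = 0 := by simp [pInt, h]

lemma pInt_zero (q : ℕ) : pInt q 0 = 1 := by simp [pInt]

lemma count_aux (m d s : ℕ) (hd : 1 ≤ d) (hm : 1 ≤ m) (hs : s ≤ d) :
    Nat.card {α : Fin (m + 1) → ℕ | (∑ i, α i) = d ∧ lexGt α (tuple m d s)} =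
      Nat.choose (m + d) d - s - 1 := by
  classical
  set T : Set (Fin (m + 1) → ℕ) := {α | ∑ i, α i = d} with hT
  set C : Set (Fin (m + 1) → ℕ) := ↑((Finset.range (s + 1)).image (tuple m d)) with hC
  have hCT : C ⊆ T := by
    intro x hx
    simp only [hC, Finset.coe_image, Set.mem_image, Finset.mem_coe, Finset.mem_range] at hx
    obtain ⟨t, ht, rfl⟩ := hx
    exact tuple_sum m d t hm (by omega)
  have hTfin : T.Finite := by
    have e : Sym (Fin (m + 1)) d ≃ {P : Fin (m + 1) → ℕ // ∑ i, P i = d} :=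
      Sym.equivNatSumOfFintype (Fin (m + 1)) d
    have : Finite {P : Fin (m + 1) → ℕ // ∑ i, P i = d} := Finite.of_equiv _ e
    exact this
  have hTcard : T.ncard = Nat.choose (m + d) d := by
    rw [← Nat.card_coe_set_eq]
    have e : Sym (Fin (m + 1)) d ≃ ↥T := Sym.equivNatSumOfFintype (Fin (m + 1)) d
    rw [← Nat.card_congr e, Nat.card_eq_fintype_card, Sym.card_sym_eq_choose]
    rw [Fintype.card_fin]
    congr 1
    omega
  have hCcard : C.ncard = s + 1 := by
    rw [hC, Set.ncard_coe_finset, Finset.card_image_of_injective _ (tuple_inj m d hm),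
      Finset.card_range]
  have hset : {α : Fin (m + 1) → ℕ | (∑ i, α i) = d ∧ lexGt α (tuple m d s)} = T \ C := by
    ext x
    simp only [Set.mem_setOf_eq, Set.mem_diff, hT, hC, Finset.coe_image, Set.mem_image,
      Finset.mem_coe, Finset.mem_range, Set.mem_setOf_eq]
    constructor
    · rintro ⟨hx, hlex⟩
      refine ⟨hx, ?_⟩
      rintro ⟨t, ht, rfl⟩
      exact tuple_not_lexGt m d s t hm (by omega) hlex
    · rintro ⟨hx, hnc⟩
      refine ⟨hx, ?_⟩
      by_contra hlex
      obtain ⟨t, ht, rfl⟩ := not_lexGt_exists m d s hm hs x hx hlex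
      exact hnc ⟨t, by omega, rfl⟩
  rw [hset, Nat.card_coe_set_eq, Set.ncard_diff hCT (hTfin.subset hCT), hTcard, hCcard]
  omega

/-- among the `(m+1)`-tuples of nonnegative integers summing to `d`,
ordered in descending lexicographic order, the `(k-s)`-th tuple (for `0 ≤ s ≤ d`,
`k = binom(m+d,d)`) is `ν = (0,…,0,s,d-s)`, i.e. exactly `k - s - 1` tuples exceed it;
and the Tsfasman–Boguslavsky quantity computed from `ν` equals `s`. -/
theorem statement_17 (q m d s : ℕ) (hq : IsPrimePow q) (hd : 1 ≤ d) (hm : 1 ≤ m)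
    (hs : s ≤ d)
    -- `ν` as a function on 1-based positions 1, …, m+1 :
    (ν : ℕ → ℕ) (hν : ν = fun i => if i = m then s else if i = m + 1 then d - s else 0)
    -- the least index `j` with `ν j ≠ 0` :
    (j : ℕ) (hj : j = sInf {i : ℕ | ν i ≠ 0}) :
    Nat.card {α : Fin (m + 1) → ℕ | (∑ i, α i) = d ∧
        lexGt α (fun i : Fin (m + 1) => ν (i.1 + 1))} =
      Nat.choose (m + d) d - s - 1 ∧
    pInt q ((m : ℤ) - 2 * j) +
        ∑ i ∈ Finset.Icc j m,
          ν i * (pInt q ((m : ℤ) - i) - pInt q ((m : ℤ) - i - j)) = s := by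
  have hνt : (fun i : Fin (m + 1) => ν (i.1 + 1)) = tuple m d s := by
    funext i
    have hi : i.1 ≤ m := by omega
    simp only [hν, tuple]
    split_ifs <;> omega
  constructor
  · rw [hνt]
    exact count_aux m d s hd hm hs
  · rcases Nat.eq_zero_or_pos s with hs0 | hs1
    · -- s = 0, j = m + 1
      subst hs0
      have hjeq : j = m + 1 := by
        rw [hj]
        have hset : {i : ℕ | ν i ≠ 0} = {m + 1} := by
          ext i
          simp only [Set.mem_setOf_eq, hν, Set.mem_singleton_iff]
          split_ifs with h1 h2 <;> simp_all <;> omega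
        rw [hset, csInf_singleton]
      rw [hjeq]
      rw [Finset.Icc_eq_empty (by omega), Finset.sum_empty]
      have A : pInt q ((m : ℤ) - 2 * ((m + 1 : ℕ) : ℤ)) = 0 :=
        pInt_neg _ (by push_cast; omega)
      rw [A]
      simp
    · -- s ≥ 1, j = m
      have hjeq : j = m := by
        rw [hj]
        apply le_antisymm
        · apply Nat.sInf_le
          simp only [Set.mem_setOf_eq, hν]
          simp
          omega
        · apply le_csInf ⟨m, by simp only [Set.mem_setOf_eq, hν]; simp; omega⟩
          intro i hi
          simp only [Set.mem_setOf_eq, hν] at hi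
          split_ifs at hi <;> omega
      rw [hjeq]
      rw [Finset.Icc_self, Finset.sum_singleton]
      have hνm : ν m = s := by simp [hν]
      have A : pInt q ((m : ℤ) - 2 * ((m : ℕ) : ℤ)) = 0 := pInt_neg _ (by push_cast; omega)
      have B : pInt q ((m : ℤ) - ((m : ℕ) : ℤ)) = 1 := by
        rw [show ((m : ℤ) - ((m : ℕ) : ℤ)) = 0 by push_cast; ring]
        exact pInt_zero q
      have C : pInt q ((m : ℤ) - ((m : ℕ) : ℤ) - ((m : ℕ) : ℤ)) = 0 :=
        pInt_neg _ (by push_cast; omega)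
      rw [hνm, A, C, B]
      simp
end

section
/- Let $q$ be a prime power with $q \ge 4$ and $m \ge 2$, and let $1 < d < q - 1$, $k = \binom{m+d}{d}$. Let $V$ be the image of the degree-$d$ Veronese embedding of $\mathbb{P}^m(\mathbb{F}_q)$ into $\mathbb{P}^{k-1}(\mathbb{F}_q)$ (the map sending a point to the tuple of all monomials of degree $d$ in its coordinates). Then $V$ contains no projective line of $\mathbb{P}^{k-1}(\mathbb{F}_q)$: there is no line $L \subseteq \mathbb{P}^{k-1}(\mathbb{F}_q)$ with all of its $q + 1$ points lying in $V$. -/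
set_option maxHeartbeats 1000000
set_option synthInstance.maxHeartbeats 400000

open MvPolynomial

section Aux

variable {Fq : Type} [Field Fq]

lemma eval_linear {n : ℕ} (φ : Module.Dual Fq (Fin n → Fq)) (x : Fin n → Fq) :
    eval x (∑ j, C (φ (Pi.single j 1)) * X j : MvPolynomial (Fin n) Fq) = φ x := by
  rw [map_sum]
  have h : ∀ j, eval x (C (φ (Pi.single j 1)) * X j) = φ (Pi.single j (x j)) := by
    intro j
    have h2 : Pi.single j (x j) = x j • (Pi.single j (1 : Fq) : Fin n → Fq) := by
      ext k
      by_cases hk : k = j <;> simp [Pi.single_apply, hk]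
    rw [h2, map_smul]
    simp [mul_comm]
  simp_rw [h, ← map_sum, Finset.univ_sum_single]

lemma linear_isHomogeneous {n : ℕ} (φ : Module.Dual Fq (Fin n → Fq)) :
    ((∑ j, C (φ (Pi.single j 1)) * X j : MvPolynomial (Fin n) Fq)).IsHomogeneous 1 :=
  IsHomogeneous.sum _ _ _ fun j _ => (isHomogeneous_X _ j).C_mul _

lemma key_eval {n d : ℕ} (u v w : Fin n → Fq) (a b c : Fq)
    (hpt : ∀ α : Fin n → ℕ, (∑ i, α i = d) →
      a * ∏ i, u i ^ α i + b * ∏ i, v i ^ α i = c * ∏ i, w i ^ α i)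
    (f : MvPolynomial (Fin n) Fq) (hf : f.IsHomogeneous d) :
    a * eval u f + b * eval v f = c * eval w f := by
  rw [eval_eq', eval_eq', eval_eq', Finset.mul_sum, Finset.mul_sum, Finset.mul_sum,
    ← Finset.sum_add_distrib]
  refine Finset.sum_congr rfl fun α hα => ?_
  have hdeg : ∑ i, (α : Fin n → ℕ) i = d := by
    have h1 : Finsupp.weight 1 α = d := hf (mem_support_iff.mp hα)
    have h2 : Finsupp.degree α = Finsupp.weight 1 α := congrFun (congrArg DFunLike.coe Finsupp.degree_eq_weight_one) α
    rw [← h1, ← h2, Finsupp.degree]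
    exact (Finset.sum_subset (Finset.subset_univ _)
      (fun i _ hi => Finsupp.notMem_support_iff.mp hi)).symm
  have := hpt α hdeg
  rw [mul_left_comm, mul_left_comm b, mul_left_comm c, ← mul_add, this]

lemma ver_smul {n d : ℕ} (r : Fq) (u : Fin n → Fq) (α : Fin n → ℕ) (hα : ∑ i, α i = d) :
    ∏ i, (r • u) i ^ α i = r ^ d * ∏ i, u i ^ α i := by
  simp only [Pi.smul_apply, smul_eq_mul, mul_pow, Finset.prod_mul_distrib]
  rw [Finset.prod_pow_eq_pow_sum, hα]

end Aux

/-- Corollary 4.9: for `q ≥ 4`, `m ≥ 2`, `1 < d < q - 1`, the image of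
the degree-`d` Veronese embedding of `ℙ^m(F_q)` — with ambient projective space
coordinatized by the monomial exponent tuples `α` of degree `d` (there are
`k = binom(m+d,d)` of them, so the ambient space is `ℙ^(k-1)(F_q)`) — contains no
projective line: no `2`-dimensional linear subspace `W` has all of its projective
points lying in the Veronese variety. -/
theorem statement_19 {Fq : Type} [Field Fq] [Fintype Fq] (q m d : ℕ)
    (hq : q = Fintype.card Fq) (hq4 : 4 ≤ q) (hm : 2 ≤ m) (hd1 : 1 < d)
    (hdq : d < q - 1) :
    ¬ ∃ W : Submodule Fq ({α : Fin (m+1) → ℕ // ∑ i, α i = d} → Fq),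
        Module.finrank Fq W = 2 ∧
        ∀ Q : Projectivization Fq ({α : Fin (m+1) → ℕ // ∑ i, α i = d} → Fq),
          Q.submodule ≤ W →
          ∃ (v : Fin (m+1) → Fq) (_ : v ≠ 0)
            (h : (fun α : {α : Fin (m+1) → ℕ // ∑ i, α i = d} =>
                ∏ i, v i ^ (α : Fin (m+1) → ℕ) i) ≠ 0),
            Q = Projectivization.mk Fq _ h := by
  rintro ⟨W, hrank, hall⟩
  set V := ({α : Fin (m+1) → ℕ // ∑ i, α i = d} → Fq)
  set ver : (Fin (m+1) → Fq) → V := fun p => fun α : {α : Fin (m+1) → ℕ // ∑ i, α i = d} =>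
      ∏ i, p i ^ (α : Fin (m+1) → ℕ) i with hver_def
  haveI : Module.Finite Fq W := Module.finite_of_finrank_eq_succ hrank
  let B : Module.Basis (Fin 2) Fq W := Module.finBasisOfFinrankEq Fq W hrank
  have hli : LinearIndependent Fq (fun i : Fin 2 => ((B i : W) : V)) :=
    B.linearIndependent.map' W.subtype (Submodule.ker_subtype W)
  set x : V := ((B 0 : W) : V) with hx_def
  set y : V := ((B 1 : W) : V) with hy_def
  have pairind : ∀ s t : Fq, s • x + t • y = 0 → s = 0 ∧ t = 0 := by
    intro s t hst
    have h := Fintype.linearIndependent_iff.mp hli ![s, t] ?_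
    · exact ⟨h 0, h 1⟩
    · rw [Fin.sum_univ_two]; simpa using hst
  have hxne : x ≠ 0 := hli.ne_zero 0
  have hyne : y ≠ 0 := hli.ne_zero 1
  have hxyne : x + y ≠ 0 := by
    intro h
    have := pairind 1 1 (by simpa using h)
    exact one_ne_zero this.1
  -- every nonzero vector of W is (up to scalar) a Veronese point
  have getpt : ∀ (z : V), z ≠ 0 → z ∈ W →
      ∃ (p : Fin (m+1) → Fq) (c : Fqˣ), p ≠ 0 ∧ (c : Fq) • ver p = z := by
    intro z hz hzW
    have hle : (Projectivization.mk Fq z hz).submodule ≤ W := by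
      rw [Projectivization.submodule_mk]
      exact (Submodule.span_singleton_le_iff_mem z W).mpr hzW
    obtain ⟨p, hp0, hpv, hQ⟩ := hall (Projectivization.mk Fq z hz) hle
    rw [Projectivization.mk_eq_mk_iff] at hQ
    obtain ⟨cu, hc⟩ := hQ
    exact ⟨p, cu, hp0, hc⟩
  obtain ⟨u, a, hu0, hxa⟩ := getpt x hxne (B 0).2
  obtain ⟨v, b, hv0, hyb⟩ := getpt y hyne (B 1).2
  obtain ⟨w, c, hw0, hwc⟩ := getpt (x + y) hxyne (W.add_mem (B 0).2 (B 1).2)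
  -- the pointwise identity on monomial coordinates
  have hpt : ∀ α : Fin (m+1) → ℕ, (∑ i, α i = d) →
      (a : Fq) * ∏ i, u i ^ α i + (b : Fq) * ∏ i, v i ^ α i
        = (c : Fq) * ∏ i, w i ^ α i := by
    intro α hα
    have hvec : (a : Fq) • ver u + (b : Fq) • ver v = (c : Fq) • ver w := by
      rw [hxa, hyb, hwc]
    have := congrFun hvec ⟨α, hα⟩
    exact this
  -- non-proportionality
  have hnp_uv : ∀ r : Fq, v ≠ r • u := by
    intro r hr
    have hverv : ver v = r ^ d • ver u := by
      funext β
      rw [hr]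
      exact ver_smul r u (β : Fin (m+1) → ℕ) β.2
    have hyx : y = ((b : Fq) * r ^ d * (a : Fq)⁻¹) • x := by
      rw [← hxa, ← hyb, hverv, smul_smul, smul_smul]
      congr 1
      field_simp
    have := pairind ((b : Fq) * r ^ d * (a : Fq)⁻¹) (-1) (by simp [hyx])
    exact one_ne_zero (neg_eq_zero.mp this.2)
  have hnp_wv : ∀ r : Fq, w ≠ r • v := by
    intro r hr
    have hverw : ver w = r ^ d • ver v := by
      funext β
      rw [hr]
      exact ver_smul r v (β : Fin (m+1) → ℕ) β.2
    set s : Fq := (c : Fq) * r ^ d * (b : Fq)⁻¹ with hs_def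
    have hxy : x + y = s • y := by
      rw [← hwc, ← hyb, hverw, smul_smul, smul_smul]
      congr 1
      rw [hs_def, inv_mul_cancel_right₀ b.ne_zero]
    have h0 : (1 : Fq) • x + (1 - s) • y = 0 := by
      rw [one_smul, sub_smul, one_smul, ← add_sub_assoc, hxy, sub_self]
    exact one_ne_zero (pairind 1 (1 - s) h0).1
  -- dual functionals
  have hv_nmem_u : v ∉ Submodule.span Fq {u} := by
    rw [Submodule.mem_span_singleton]
    rintro ⟨r, hr⟩
    exact hnp_uv r hr.symm
  have hv_nmem_w : v ∉ Submodule.span Fq {w} := by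
    rw [Submodule.mem_span_singleton]
    rintro ⟨r, hr⟩
    have hr0 : r ≠ 0 := by
      rintro rfl
      rw [zero_smul] at hr
      exact hv0 hr.symm
    refine hnp_wv r⁻¹ ?_
    rw [← hr, smul_smul, inv_mul_cancel₀ hr0, one_smul]
  obtain ⟨φ, hφv, hφmap⟩ :=
    Submodule.exists_dual_map_eq_bot_of_notMem hv_nmem_u inferInstance
  obtain ⟨ψ, hψv, hψmap⟩ :=
    Submodule.exists_dual_map_eq_bot_of_notMem hv_nmem_w inferInstance
  have hφu : φ u = 0 := by
    have : φ u ∈ Submodule.map φ (Submodule.span Fq {u}) :=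
      Submodule.mem_map_of_mem (Submodule.mem_span_singleton_self u)
    rw [hφmap] at this
    exact this
  have hψw : ψ w = 0 := by
    have : ψ w ∈ Submodule.map ψ (Submodule.span Fq {w}) :=
      Submodule.mem_map_of_mem (Submodule.mem_span_singleton_self w)
    rw [hψmap] at this
    exact this
  obtain ⟨i₀, hi₀⟩ := Function.ne_iff.mp hv0
  simp only [Pi.zero_apply] at hi₀
  -- the homogeneous polynomial
  set Lφ : MvPolynomial (Fin (m+1)) Fq := ∑ j, C (φ (Pi.single j 1)) * X j with hLφ
  set Lψ : MvPolynomial (Fin (m+1)) Fq := ∑ j, C (ψ (Pi.single j 1)) * X j with hLψ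
  set f : MvPolynomial (Fin (m+1)) Fq := Lφ * Lψ * (X i₀) ^ (d - 2) with hf_def
  have hfhom : f.IsHomogeneous d := by
    have h := ((linear_isHomogeneous φ).mul (linear_isHomogeneous ψ)).mul
      ((isHomogeneous_X Fq i₀).pow (d - 2))
    have hd' : 1 + 1 + 1 * (d - 2) = d := by
      rw [one_mul]
      exact Nat.add_sub_cancel' hd1
    rwa [hd'] at h
  have heval : ∀ z : Fin (m+1) → Fq, eval z f = φ z * ψ z * (z i₀) ^ (d - 2) := by
    intro z
    rw [hf_def, map_mul, map_mul, map_pow, eval_X, hLφ, hLψ, eval_linear, eval_linear]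
  have hmain := key_eval u v w (a : Fq) (b : Fq) (c : Fq) hpt f hfhom
  rw [heval u, heval v, heval w, hφu, hψw] at hmain
  simp only [zero_mul, mul_zero, add_zero, zero_add] at hmain
  have : (b : Fq) * (φ v * ψ v * v i₀ ^ (d - 2)) = 0 := by
    simpa using hmain
  have hb : (b : Fq) ≠ 0 := b.ne_zero
  have := mul_eq_zero.mp this
  rcases this with h | h
  · exact hb h
  · rcases mul_eq_zero.mp h with h' | h'
    · rcases mul_eq_zero.mp h' with h'' | h''
      · exact hφv h''
      · exact hψv h''
    · exact absurd h' (pow_ne_zero _ hi₀)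
end
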